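/- arXiv:0905.2787 — 13 statements merged into one kernel-verified Lean document; each statement's English description precedes it below -/
import Mathlib

section
/- For all real t with 0 < t < 1, one has π/2 − (1/2)·ln((1+t)^{1−t}/(1−t)^{1+t}) < E(t) < (π−1)/2 + ((1−t²)/(4t))·ln((1+t)/(1−t)). -/
open Real MeasureTheory Set

private lemma i2' : ∫ x in (0:ℝ)..(π/2), sin x ^ 2 = π/4 := by
  simp [integral_sin_sq]; ring

private lemma i4' : ∫ x in (0:ℝ)..(π/2), sin x ^ 4 = 3*π/16 := by
  have h := integral_sin_pow (a := 0) (b := π/2) 2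
  norm_num [i2'] at h; linarith

private lemma i6' : ∫ x in (0:ℝ)..(π/2), sin x ^ 6 = 5*π/32 := by
  have h := integral_sin_pow (a := 0) (b := π/2) 4
  norm_num [i4'] at h; linarith

private lemma i8' : ∫ x in (0:ℝ)..(π/2), sin x ^ 8 = 35*π/256 := by
  have h := integral_sin_pow (a := 0) (b := π/2) 6
  norm_num [i6'] at h; linarith

private lemma sqrt_lb' {u : ℝ} (h0 : 0 ≤ u) (h1 : u ≤ 1) : 1 - u ≤ Real.sqrt (1 - u) := by
  nlinarith [Real.sq_sqrt (by linarith : (0:ℝ) ≤ 1 - u),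
    Real.sqrt_nonneg (1 - u), Real.sqrt_nonneg 1]

private lemma sqrt_ub' {u : ℝ} (h0 : 0 ≤ u) (h1 : u ≤ 1) :
    Real.sqrt (1 - u) ≤ 1 - u/2 - u^2/8 - u^3/16 - 5*u^4/128 := by
  have h2 : u^2 ≤ u := by nlinarith
  have h3 : u^3 ≤ u := by nlinarith
  have h4 : u^4 ≤ u := by nlinarith
  have hp : (0:ℝ) ≤ 1 - u/2 - u^2/8 - u^3/16 - 5*u^4/128 := by linarith
  have hsq : 1 - u ≤ (1 - u/2 - u^2/8 - u^3/16 - 5*u^4/128)^2 := by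
    nlinarith [pow_nonneg h0 5, pow_nonneg h0 6, pow_nonneg h0 7, pow_nonneg h0 8]
  calc Real.sqrt (1 - u) ≤ Real.sqrt ((1 - u/2 - u^2/8 - u^3/16 - 5*u^4/128)^2) :=
        Real.sqrt_le_sqrt hsq
    _ = _ := Real.sqrt_sq hp

private lemma intLB' (t : ℝ) :
    ∫ x in (0:ℝ)..(π/2), (1 - t^2 * sin x ^ 2) = π/2 - π/4 * t^2 := by
  rw [intervalIntegral.integral_sub (f := fun _ => (1:ℝ)) (g := fun x => t^2 * sin x ^ 2)
      (intervalIntegrable_const)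
      ((continuous_const.mul (continuous_sin.pow 2)).intervalIntegrable _ _),
    intervalIntegral.integral_const_mul, i2']
  simp; ring

private lemma intUB' (t : ℝ) :
    ∫ x in (0:ℝ)..(π/2),
      (1 - t^2*sin x^2/2 - (t^2*sin x^2)^2/8 - (t^2*sin x^2)^3/16 - 5*(t^2*sin x^2)^4/128)
      = π/2 - π*t^2/8 - 3*π*t^4/128 - 5*π*t^6/512 - 175*π*t^8/32768 := by
  have hi : ∀ (c : ℝ) (n : ℕ),
      IntervalIntegrable (fun x => c * sin x ^ n) volume 0 (π/2) :=
    fun c n => (continuous_const.mul (continuous_sin.pow n)).intervalIntegrable _ _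
  have he : (fun x => 1 - t^2*sin x^2/2 - (t^2*sin x^2)^2/8 - (t^2*sin x^2)^3/16
      - 5*(t^2*sin x^2)^4/128)
      = fun x => (((1 - (t^2/2) * sin x ^ 2) - (t^4/8) * sin x ^ 4) - (t^6/16) * sin x ^ 6)
          - (5*t^8/128) * sin x ^ 8 := by
    funext x; ring
  rw [he]
  rw [intervalIntegral.integral_sub (by
        exact (((intervalIntegrable_const).sub (hi _ 2)).sub (hi _ 4)).sub (hi _ 6)) (hi _ 8),
      intervalIntegral.integral_sub (by
        exact ((intervalIntegrable_const).sub (hi _ 2)).sub (hi _ 4)) (hi _ 6),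
      intervalIntegral.integral_sub (by
        exact (intervalIntegrable_const).sub (hi _ 2)) (hi _ 4),
      intervalIntegral.integral_sub (intervalIntegrable_const) (hi _ 2),
      intervalIntegral.integral_const_mul, intervalIntegral.integral_const_mul,
      intervalIntegral.integral_const_mul, intervalIntegral.integral_const_mul,
      i2', i4', i6', i8']
  simp; ring

private lemma log_cubic' {t : ℝ} (h0 : 0 ≤ t) (h1 : t < 1) :
    2*t + 2*t^3/3 ≤ Real.log (1+t) - Real.log (1-t) := by
  set f : ℝ → ℝ := fun x => Real.log (1+x) - Real.log (1-x) - 2*x - 2*x^3/3 with hf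
  set f' : ℝ → ℝ := fun x => 1/(1+x) + 1/(1-x) - 2 - 2*x^2 with hf'
  have hderiv : ∀ x ∈ Ico (0:ℝ) 1, HasDerivAt f (f' x) x := by
    intro x hx
    have h1x : (0:ℝ) < 1 + x := by linarith [hx.1]
    have h2x : (0:ℝ) < 1 - x := by linarith [hx.2]
    have d1 : HasDerivAt (fun y : ℝ => Real.log (1+y)) (1/(1+x)) x := by
      have h : HasDerivAt (fun y : ℝ => 1+y) 1 x := (hasDerivAt_id x).const_add 1
      simpa using h.log h1x.ne'
    have d2 : HasDerivAt (fun y : ℝ => Real.log (1-y)) (-1/(1-x)) x := by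
      have h : HasDerivAt (fun y : ℝ => 1-y) (-1) x := (hasDerivAt_id x).const_sub 1
      simpa using h.log h2x.ne'
    have d3 : HasDerivAt (fun y : ℝ => 2*y) 2 x := by
      simpa using (hasDerivAt_id x).const_mul 2
    have d4 : HasDerivAt (fun y : ℝ => 2*y^3/3) (2*x^2) x := by
      have := (hasDerivAt_pow 3 x).const_mul (2/3 : ℝ)
      have e : (fun y : ℝ => 2*y^3/3) = fun y => (2/3:ℝ) * y^3 := by funext y; ring
      rw [e]; exact this.congr_deriv (by push_cast; ring_nf)
    have := ((d1.sub d2).sub d3).sub d4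
    exact this.congr_deriv (by
    simp only [hf']
    ring)
  have hmono : MonotoneOn f (Icc 0 t) := by
    apply monotoneOn_of_hasDerivWithinAt_nonneg (convex_Icc 0 t) ?cont
      (f' := f') ?deriv ?pos
    case cont =>
      apply ContinuousOn.sub
      apply ContinuousOn.sub
      apply ContinuousOn.sub
      · apply ContinuousOn.log (by fun_prop)
        intro x hx; simp only [mem_Icc] at hx; nlinarith [hx.1]
      · apply ContinuousOn.log (by fun_prop)
        intro x hx; simp only [mem_Icc] at hx; nlinarith [hx.2]
      · fun_prop
      · fun_prop
    case deriv =>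
      intro x hx
      rw [interior_Icc] at hx
      exact ((hderiv x ⟨le_of_lt hx.1, lt_of_lt_of_le hx.2 (le_of_lt h1)⟩).hasDerivWithinAt)
    case pos =>
      intro x hx
      rw [interior_Icc] at hx
      have hx1 : 0 < 1 + x := by linarith [hx.1]
      have hx2 : 0 < 1 - x := by linarith [hx.2, h1]
      have key : f' x = 2*x^4/((1+x)*(1-x)) := by
        simp only [hf']
        field_simp
        ring
      rw [key]
      positivity
  have := hmono (left_mem_Icc.mpr h0) (right_mem_Icc.mpr h0) h0
  simp only [hf] at this
  norm_num at this
  linarith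

theorem stmt_0 (t : ℝ) (ht0 : 0 < t) (ht1 : t < 1) :
    π / 2 - (1 / 2) * Real.log ((1 + t) ^ (1 - t) / (1 - t) ^ (1 + t))
      < (∫ θ in (0:ℝ)..(π / 2), Real.sqrt (1 - t ^ 2 * Real.sin θ ^ 2)) ∧
    (∫ θ in (0:ℝ)..(π / 2), Real.sqrt (1 - t ^ 2 * Real.sin θ ^ 2))
      < (π - 1) / 2 + ((1 - t ^ 2) / (4 * t)) * Real.log ((1 + t) / (1 - t)) := by
  have h1t : (0:ℝ) < 1 + t := by linarith
  have h2t : (0:ℝ) < 1 - t := by linarith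
  have hu : ∀ x : ℝ, 0 ≤ t^2 * sin x ^ 2 := fun x => by positivity
  have hu1 : ∀ x : ℝ, t^2 * sin x ^ 2 ≤ 1 := fun x => by
    nlinarith [sin_sq_le_one x, sq_nonneg (sin x), sq_nonneg t]
  have hsqint : IntervalIntegrable (fun θ => Real.sqrt (1 - t ^ 2 * Real.sin θ ^ 2))
      volume 0 (π/2) :=
    ((continuous_const.sub (continuous_const.mul (continuous_sin.pow 2))).sqrt).intervalIntegrable _ _
  constructor
  · -- lower bound
    have hle : π/2 - π/4 * t^2 ≤ ∫ θ in (0:ℝ)..(π/2), Real.sqrt (1 - t ^ 2 * Real.sin θ ^ 2) := by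
      rw [← intLB' t]
      apply intervalIntegral.integral_mono_on (by positivity)
        ((continuous_const.sub (continuous_const.mul (continuous_sin.pow 2))).intervalIntegrable _ _)
        hsqint
      intro x _
      exact sqrt_lb' (hu x) (hu1 x)
    have hlog : Real.log ((1 + t) ^ (1 - t) / (1 - t) ^ (1 + t))
        = (1 - t) * Real.log (1 + t) - (1 + t) * Real.log (1 - t) := by
      rw [Real.log_div (Real.rpow_pos_of_pos h1t _).ne' (Real.rpow_pos_of_pos h2t _).ne',
        Real.log_rpow h1t, Real.log_rpow h2t]
    rw [hlog]
    have hA : t ≤ (1+t) * Real.log (1+t) := by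
      have h := Real.one_sub_inv_le_log_of_pos h1t
      have h' : t/(1+t) ≤ Real.log (1+t) := by
        rwa [show 1 - (1+t)⁻¹ = t/(1+t) by field_simp; ring] at h
      have := (div_le_iff₀ h1t).mp h'
      linarith
    have hB : Real.log (1-t) ≤ -t := by
      have := Real.log_le_sub_one_of_pos h2t
      linarith
    have hA0 : 0 ≤ Real.log (1+t) := Real.log_nonneg (by linarith)
    have key : π/4 * t^2 < (1/2) * ((1 - t) * Real.log (1 + t) - (1 + t) * Real.log (1 - t)) := by
      nlinarith [Real.pi_lt_d2, mul_le_mul_of_nonneg_left hA (le_of_lt h2t),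
        mul_le_mul_of_nonneg_left hB (by positivity : (0:ℝ) ≤ (1+t)^2),
        mul_pos (mul_pos ht0 ht0) h1t, mul_nonneg hA0 (le_of_lt ht0), sq_nonneg t]
    linarith
  · -- upper bound
    have hle : (∫ θ in (0:ℝ)..(π/2), Real.sqrt (1 - t ^ 2 * Real.sin θ ^ 2))
        ≤ π/2 - π*t^2/8 - 3*π*t^4/128 - 5*π*t^6/512 - 175*π*t^8/32768 := by
      rw [← intUB' t]
      apply intervalIntegral.integral_mono_on (by positivity) hsqint
        (Continuous.intervalIntegrable (by fun_prop) _ _)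
      intro x _
      have := sqrt_ub' (hu x) (hu1 x)
      calc Real.sqrt (1 - t ^ 2 * sin x ^ 2) ≤ _ := this
        _ = _ := by ring
    have hlog : Real.log ((1 + t) / (1 - t)) = Real.log (1+t) - Real.log (1-t) :=
      Real.log_div h1t.ne' h2t.ne'
    have hcube := log_cubic' (le_of_lt ht0) ht1
    have hpos : (0:ℝ) < (1 - t^2) / (4*t) := by
      have : (0:ℝ) < 1 - t^2 := by nlinarith
      positivity
    have hmul : ((1 - t^2) / (4*t)) * (2*t + 2*t^3/3) = (1 - t^2) * (3 + t^2) / 6 := by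
      field_simp
      ring
    have hlb : (1 - t^2) * (3 + t^2) / 6
        ≤ ((1 - t^2) / (4*t)) * Real.log ((1 + t) / (1 - t)) := by
      rw [hlog, ← hmul]
      exact mul_le_mul_of_nonneg_left hcube (le_of_lt hpos)
    have hq : 3.141592 * (t^2/8 + 3*t^4/128 + 5*t^6/512 + 175*t^8/32768)
        ≤ π * (t^2/8 + 3*t^4/128 + 5*t^6/512 + 175*t^8/32768) :=
      mul_le_mul_of_nonneg_right Real.pi_gt_d6.le (by positivity)
    have hfin : π/2 - π*t^2/8 - 3*π*t^4/128 - 5*π*t^6/512 - 175*π*t^8/32768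
        < (π - 1) / 2 + (1 - t^2) * (3 + t^2) / 6 := by
      have hs : (0:ℝ) ≤ t^2 := sq_nonneg t
      have h1s : (0:ℝ) ≤ 1 - t^2 := by nlinarith
      nlinarith [mul_nonneg (mul_nonneg h1s h1s) h1s, mul_nonneg (mul_nonneg h1s h1s) hs,
        mul_nonneg (mul_nonneg h1s hs) hs, mul_nonneg (mul_nonneg hs hs) hs,
        mul_pos ht0 ht0]
    linarith
end

section
/- For all real numbers a, b with b > a > 0, one has (π/2)·ln(√(b/a) + √(b/a − 1))/√(b(b−a)) ≤ F(a,b) ≤ (π/2)·arctan(√(b/a − 1))/√(a(b−a)). -/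
open Real

lemma aux_cos_le (t : ℝ) (ht0 : 0 ≤ t) (ht1 : t ≤ 1) :
    Real.cos (π * t / 2) ≤ 1 - t ^ 2 := by
  have hπ1 : (3.14 : ℝ) < π := Real.pi_gt_d2
  have hπ2 : π < 3.15 := Real.pi_lt_d2
  rcases le_or_gt t (3/5) with h | h
  · rcases eq_or_lt_of_le ht0 with h0 | ht0'
    · rw [← h0]; simp
    · set z := π * t / 4 with hzdef
      have hz0 : 0 < z := by positivity
      have hz1 : z ≤ 1 := by rw [hzdef]; nlinarith
      have hs : z - z ^ 3 / 4 < Real.sin z := by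
        have := Real.sin_gt_sub_cube hz0; nlinarith [pow_pos hz0 3]
      have hcos : Real.cos (π * t / 2) = 1 - 2 * Real.sin z ^ 2 := by
        have h1 := Real.sin_sq_eq_half_sub z
        have h2 : 2 * z = π * t / 2 := by rw [hzdef]; ring
        rw [h2] at h1; linarith
      rw [hcos]
      have hπsq : π ^ 2 ≤ 9.9225 := by nlinarith
      have hπsq2 : (9.8596:ℝ) ≤ π ^ 2 := by nlinarith
      have htsq : t ^ 2 ≤ 9/25 := by nlinarith
      have hz2 : z ^ 2 ≤ 0.224 := by
        rw [hzdef]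
        have := mul_le_mul hπsq htsq (sq_nonneg t) (by norm_num : (0:ℝ) ≤ 9.9225)
        nlinarith
      have hlow : (16/17 : ℝ) * z ≤ z - z ^ 3 / 4 := by nlinarith [hz0.le]
      have hlow2 : (16/17 : ℝ) * z ≤ Real.sin z := le_trans hlow hs.le
      have hsq : ((16/17 : ℝ) * z) ^ 2 ≤ Real.sin z ^ 2 := by
        have h16 : (0:ℝ) ≤ (16/17 : ℝ) * z := by positivity
        nlinarith
      have hzt : z ^ 2 = π ^ 2 * t ^ 2 / 16 := by rw [hzdef]; ring
      have hfin := mul_le_mul_of_nonneg_right hπsq2 (sq_nonneg t)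
      nlinarith [sq_nonneg t]
  · have key : Real.cos (π * t / 2) = Real.sin (π / 2 - π * t / 2) := by
      rw [Real.sin_pi_div_two_sub]
    rw [key]
    have h1 : Real.sin (π / 2 - π * t / 2) ≤ π / 2 - π * t / 2 :=
      Real.sin_le (by nlinarith)
    nlinarith

lemma poly_low (a b t s co : ℝ) (ha : 0 < a) (hab : a < b)
    (ht0 : 0 ≤ t) (ht1 : t ≤ 1) (hs0 : 0 ≤ s) (hsle : s ≤ 1 - t ^ 2)
    (hpy : s ^ 2 + co ^ 2 = 1) :
    a ^ 2 * co ^ 2 + b ^ 2 * s ^ 2 ≤ (b - (b - a) * t ^ 2) ^ 2 := by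
  have hu0 : 0 ≤ 1 - t ^ 2 := le_trans hs0 hsle
  have hssq : s ^ 2 ≤ (1 - t ^ 2) ^ 2 := by nlinarith
  nlinarith [mul_nonneg (mul_nonneg ha.le (by linarith : (0:ℝ) ≤ b - a))
      (mul_nonneg hu0 (sq_nonneg t)),
    mul_le_mul_of_nonneg_left hssq (by nlinarith : (0:ℝ) ≤ b ^ 2 - a ^ 2)]

lemma poly_up (a b x s co : ℝ) (ha : 0 < a) (hab : a < b)
    (hx0 : 0 ≤ x) (hx1 : x ≤ 1) (hxs : x ≤ s) (hs1 : s ≤ 1)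
    (hpy : s ^ 2 + co ^ 2 = 1) :
    (a + (b - a) * x ^ 2) ^ 2 ≤ a ^ 2 * co ^ 2 + b ^ 2 * s ^ 2 := by
  have hsinsq : x ^ 2 ≤ s ^ 2 := by nlinarith
  nlinarith [mul_le_mul_of_nonneg_left hsinsq (by nlinarith : (0:ℝ) ≤ b ^ 2 - a ^ 2),
    mul_le_mul_of_nonneg_left (by nlinarith : x ^ 2 * x ^ 2 ≤ x ^ 2)
      (sq_nonneg (b - a))]

lemma ftc_up (a c sa sc : ℝ) (ha : 0 < a) (hc : 0 < c)
    (hsa2 : sa ^ 2 = a) (hsc2 : sc ^ 2 = c) (hsa0 : 0 < sa) (hsc0 : 0 < sc) :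
    (∫ θ in (0:ℝ)..(π/2), 1 / (a + c * (2/π*θ) ^ 2))
      = π/(2*(sa*sc)) * Real.arctan (sc/sa) := by
  have hπ : 0 < π := Real.pi_pos
  have hden_pos : ∀ θ : ℝ, 0 < a + c * (2/π*θ) ^ 2 := fun θ => by positivity
  have hg_int : IntervalIntegrable (fun θ : ℝ => 1 / (a + c * (2/π*θ) ^ 2))
      MeasureTheory.volume 0 (π/2) := by
    apply Continuous.intervalIntegrable
    exact Continuous.div continuous_const
      (continuous_const.add (continuous_const.mul
        ((continuous_const.mul continuous_id).pow 2)))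
      (fun θ => (hden_pos θ).ne')
  have hderiv : ∀ θ ∈ Set.uIcc (0:ℝ) (π/2),
      HasDerivAt (fun x : ℝ => π/(2*(sa*sc)) * Real.arctan (2/π*(sc/sa) * x))
        (1 / (a + c * (2/π*θ) ^ 2)) θ := by
    intro θ _
    have hlin : HasDerivAt (fun x : ℝ => 2/π*(sc/sa) * x) (2/π*(sc/sa)) θ := by
      simpa using (hasDerivAt_id θ).const_mul (2/π*(sc/sa))
    have harct := (Real.hasDerivAt_arctan (2/π*(sc/sa) * θ)).comp θ hlin
    have hcomb := harct.const_mul (π/(2*(sa*sc)))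
    refine hcomb.congr_deriv (Eq.symm ?_)
    have h1 : 0 < 1 + (2/π*(sc/sa) * θ) ^ 2 := by positivity
    rw [← hsa2, ← hsc2]
    field_simp
  rw [intervalIntegral.integral_eq_sub_of_hasDerivAt hderiv hg_int]
  have hval : 2/π*(sc/sa) * (π/2) = sc/sa := by field_simp
  rw [hval]
  norm_num

lemma ftc_low (b c sb sc : ℝ) (hb : 0 < b) (hc : 0 < c) (hcb : c < b)
    (hsb2 : sb ^ 2 = b) (hsc2 : sc ^ 2 = c) (hsb0 : 0 < sb) (hsc0 : 0 < sc)
    (hscsb : sc < sb) :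
    (∫ θ in (0:ℝ)..(π/2), 1 / (b - c * (2/π*θ - 1) ^ 2))
      = π/(4*(sb*sc)) * (Real.log (sb + sc) - Real.log (sb - sc)) := by
  have hπ : 0 < π := Real.pi_pos
  have hden_pos : ∀ θ ∈ Set.Icc (0:ℝ) (π/2), 0 < b - c * (2/π*θ - 1) ^ 2 := by
    intro θ hθ
    obtain ⟨h0, h1⟩ := hθ
    have hw1 : -1 ≤ 2/π*θ - 1 := by
      have : 0 ≤ 2/π*θ := by positivity
      linarith
    have hw2 : 2/π*θ - 1 ≤ 0 := by
      rw [sub_nonpos, div_mul_eq_mul_div, div_le_one hπ]; linarith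
    have hwsq : (2/π*θ - 1) ^ 2 ≤ 1 := by nlinarith
    nlinarith
  have hg_int : IntervalIntegrable (fun θ : ℝ => 1 / (b - c * (2/π*θ - 1) ^ 2))
      MeasureTheory.volume 0 (π/2) := by
    apply ContinuousOn.intervalIntegrable
    rw [Set.uIcc_of_le (by positivity)]
    apply ContinuousOn.div continuousOn_const
    · exact Continuous.continuousOn (continuous_const.sub (continuous_const.mul
        (((continuous_const.mul continuous_id).sub continuous_const).pow 2)))
    · exact fun θ hθ => (hden_pos θ hθ).ne'
  have hderiv : ∀ θ ∈ Set.uIcc (0:ℝ) (π/2),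
      HasDerivAt (fun x : ℝ => π/(4*(sb*sc)) *
        (Real.log (sb + sc*(2/π*x - 1)) - Real.log (sb - sc*(2/π*x - 1))))
        (1 / (b - c * (2/π*θ - 1) ^ 2)) θ := by
    intro θ hθ
    rw [Set.uIcc_of_le (by positivity)] at hθ
    obtain ⟨h0, h1⟩ := hθ
    have hw1 : -1 ≤ 2/π*θ - 1 := by
      have : 0 ≤ 2/π*θ := by positivity
      linarith
    have hw2 : 2/π*θ - 1 ≤ 0 := by
      rw [sub_nonpos, div_mul_eq_mul_div, div_le_one hπ]; linarith
    have hp1 : 0 < sb + sc*(2/π*θ - 1) := by nlinarith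
    have hp2 : 0 < sb - sc*(2/π*θ - 1) := by nlinarith
    have hlin1 : HasDerivAt (fun x : ℝ => sb + sc*(2/π*x - 1)) (sc*(2/π)) θ := by
      simpa using
        ((((hasDerivAt_id θ).const_mul (2/π)).sub_const 1).const_mul sc).const_add sb
    have hlin2 : HasDerivAt (fun x : ℝ => sb - sc*(2/π*x - 1)) (-(sc*(2/π))) θ := by
      simpa [Pi.sub_def] using
        ((hasDerivAt_const θ sb).sub
          ((((hasDerivAt_id θ).const_mul (2/π)).sub_const 1).const_mul sc))
    have hlog1 := (Real.hasDerivAt_log hp1.ne').comp θ hlin1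
    have hlog2 := (Real.hasDerivAt_log hp2.ne').comp θ hlin2
    have hcomb := ((hlog1.sub hlog2).const_mul (π/(4*(sb*sc))))
    refine hcomb.congr_deriv (Eq.symm ?_)
    obtain ⟨p, hp⟩ : ∃ p : ℝ, p = sb + sc*(2/π*θ - 1) := ⟨_, rfl⟩
    obtain ⟨q, hq⟩ : ∃ q : ℝ, q = sb - sc*(2/π*θ - 1) := ⟨_, rfl⟩
    have hp0 : 0 < p := hp ▸ hp1
    have hq0 : 0 < q := hq ▸ hp2
    have hfact : b - c * (2/π*θ - 1) ^ 2 = p * q := by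
      rw [hp, hq, ← hsb2, ← hsc2]; ring
    have hq2 : q = 2 * sb - p := by rw [hp, hq]; ring
    rw [hfact, ← hp, ← hq, hq2]
    have hne : 2 * sb - p ≠ 0 := by rw [← hq2]; exact hq0.ne'
    field_simp
    ring
  rw [intervalIntegral.integral_eq_sub_of_hasDerivAt hderiv hg_int]
  have hval : 2/π*(π/2) - 1 = 0 := by field_simp; ring
  have hval0 : 2/π*(0:ℝ) - 1 = -1 := by ring
  rw [hval, hval0]
  norm_num
  ring

set_option maxHeartbeats 2000000 in
theorem stmt_1 (a b : ℝ) (ha : 0 < a) (hab : a < b) :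
    (π / 2) * Real.log (Real.sqrt (b / a) + Real.sqrt (b / a - 1)) / Real.sqrt (b * (b - a))
      ≤ (∫ θ in (0:ℝ)..(π / 2),
          1 / Real.sqrt (a ^ 2 * Real.cos θ ^ 2 + b ^ 2 * Real.sin θ ^ 2)) ∧
    (∫ θ in (0:ℝ)..(π / 2),
        1 / Real.sqrt (a ^ 2 * Real.cos θ ^ 2 + b ^ 2 * Real.sin θ ^ 2))
      ≤ (π / 2) * Real.arctan (Real.sqrt (b / a - 1)) / Real.sqrt (a * (b - a)) := by
  have hb : 0 < b := ha.trans hab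
  have hπ : 0 < π := Real.pi_pos
  have hc : 0 < b - a := by linarith
  have hcb : b - a < b := by linarith
  obtain ⟨sa, hsadef⟩ : ∃ x : ℝ, x = Real.sqrt a := ⟨_, rfl⟩
  obtain ⟨sb, hsbdef⟩ : ∃ x : ℝ, x = Real.sqrt b := ⟨_, rfl⟩
  obtain ⟨sc, hscdef⟩ : ∃ x : ℝ, x = Real.sqrt (b - a) := ⟨_, rfl⟩
  have hsa2 : sa ^ 2 = a := by rw [hsadef]; exact Real.sq_sqrt ha.le
  have hsb2 : sb ^ 2 = b := by rw [hsbdef]; exact Real.sq_sqrt hb.le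
  have hsc2 : sc ^ 2 = b - a := by rw [hscdef]; exact Real.sq_sqrt hc.le
  have hsa0 : 0 < sa := by rw [hsadef]; exact Real.sqrt_pos.2 ha
  have hsb0 : 0 < sb := by rw [hsbdef]; exact Real.sqrt_pos.2 hb
  have hsc0 : 0 < sc := by rw [hscdef]; exact Real.sqrt_pos.2 hc
  have hscsb : sc < sb := by
    rw [hscdef, hsbdef]; exact Real.sqrt_lt_sqrt hc.le hcb
  have hratio : Real.sqrt (b / a - 1) = sc / sa := by
    have h1 : b / a - 1 = (b - a) / a := by field_simp
    rw [h1, hscdef, hsadef, ← Real.sqrt_div hc.le]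
  have hratiob : Real.sqrt (b / a) = sb / sa := by
    rw [hsbdef, hsadef, ← Real.sqrt_div hb.le]
  have hprodac : Real.sqrt (a * (b - a)) = sa * sc := by
    rw [hsadef, hscdef]; exact Real.sqrt_mul ha.le _
  have hprodbc : Real.sqrt (b * (b - a)) = sb * sc := by
    rw [hsbdef, hscdef]; exact Real.sqrt_mul hb.le _
  have hq_ge : ∀ θ : ℝ, a ^ 2 ≤ a ^ 2 * Real.cos θ ^ 2 + b ^ 2 * Real.sin θ ^ 2 := by
    intro θ
    nlinarith [Real.sin_sq_add_cos_sq θ, sq_nonneg (Real.sin θ),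
      mul_le_mul_of_nonneg_right (by nlinarith : a ^ 2 ≤ b ^ 2) (sq_nonneg (Real.sin θ))]
  have hq_pos : ∀ θ : ℝ, 0 < a ^ 2 * Real.cos θ ^ 2 + b ^ 2 * Real.sin θ ^ 2 :=
    fun θ => lt_of_lt_of_le (by positivity) (hq_ge θ)
  have hf_cont : Continuous
      (fun θ => 1 / Real.sqrt (a ^ 2 * Real.cos θ ^ 2 + b ^ 2 * Real.sin θ ^ 2)) := by
    apply Continuous.div continuous_const
    · exact Real.continuous_sqrt.comp
        ((continuous_const.mul (Real.continuous_cos.pow 2)).add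
          (continuous_const.mul (Real.continuous_sin.pow 2)))
    · intro θ; exact (Real.sqrt_pos.2 (hq_pos θ)).ne'
  have hf_int : IntervalIntegrable
      (fun θ => 1 / Real.sqrt (a ^ 2 * Real.cos θ ^ 2 + b ^ 2 * Real.sin θ ^ 2))
      MeasureTheory.volume 0 (π/2) := hf_cont.intervalIntegrable _ _
  constructor
  · -- LOWER BOUND
    have hden_pos : ∀ θ ∈ Set.Icc (0:ℝ) (π/2), a ≤ b - (b - a) * (2/π*θ - 1) ^ 2 := by
      intro θ hθ
      obtain ⟨h0, h1⟩ := hθ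
      have hw1 : -1 ≤ 2/π*θ - 1 := by
        have : 0 ≤ 2/π*θ := by positivity
        linarith
      have hw2 : 2/π*θ - 1 ≤ 0 := by
        rw [sub_nonpos, div_mul_eq_mul_div, div_le_one hπ]; linarith
      have hwsq : (2/π*θ - 1) ^ 2 ≤ 1 := by nlinarith
      nlinarith
    have hg_int : IntervalIntegrable (fun θ : ℝ => 1 / (b - (b - a) * (2/π*θ - 1) ^ 2))
        MeasureTheory.volume 0 (π/2) := by
      apply ContinuousOn.intervalIntegrable
      rw [Set.uIcc_of_le (by positivity)]
      apply ContinuousOn.div continuousOn_const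
      · exact Continuous.continuousOn (continuous_const.sub (continuous_const.mul
          (((continuous_const.mul continuous_id).sub continuous_const).pow 2)))
      · intro θ hθ
        have := hden_pos θ hθ
        intro hzero; rw [hzero] at this; linarith
    have hpt : ∀ θ ∈ Set.Icc (0:ℝ) (π/2), 1 / (b - (b - a) * (2/π*θ - 1) ^ 2) ≤
        1 / Real.sqrt (a ^ 2 * Real.cos θ ^ 2 + b ^ 2 * Real.sin θ ^ 2) := by
      intro θ hθ
      obtain ⟨h0, h1⟩ := hθ
      have ht0 : 0 ≤ 1 - 2/π*θ := by
        rw [sub_nonneg, div_mul_eq_mul_div, div_le_one hπ]; linarith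
      have ht1 : 1 - 2/π*θ ≤ 1 := by
        have : 0 ≤ 2/π*θ := by positivity
        linarith
      have hcoskey := aux_cos_le (1 - 2/π*θ) ht0 ht1
      have harg : π * (1 - 2/π*θ) / 2 = π / 2 - θ := by
        field_simp
      rw [harg, Real.cos_pi_div_two_sub] at hcoskey
      have hs0 : 0 ≤ Real.sin θ := Real.sin_nonneg_of_nonneg_of_le_pi h0 (by linarith)
      have hkey : a ^ 2 * Real.cos θ ^ 2 + b ^ 2 * Real.sin θ ^ 2
          ≤ (b - (b - a) * (2/π*θ - 1) ^ 2) ^ 2 := by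
        have := poly_low a b (1 - 2/π*θ) (Real.sin θ) (Real.cos θ) ha hab ht0 ht1
          hs0 hcoskey (Real.sin_sq_add_cos_sq θ)
        have hwt : (2/π*θ - 1) ^ 2 = (1 - 2/π*θ) ^ 2 := by ring
        rw [hwt]
        linarith
      have hdpos : 0 < b - (b - a) * (2/π*θ - 1) ^ 2 :=
        lt_of_lt_of_le ha (hden_pos θ ⟨h0, h1⟩)
      have hsqrt_le : Real.sqrt (a ^ 2 * Real.cos θ ^ 2 + b ^ 2 * Real.sin θ ^ 2)
          ≤ b - (b - a) * (2/π*θ - 1) ^ 2 := by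
        rw [show b - (b - a) * (2/π*θ - 1) ^ 2
            = Real.sqrt ((b - (b - a) * (2/π*θ - 1) ^ 2) ^ 2) from
          (Real.sqrt_sq hdpos.le).symm]
        exact Real.sqrt_le_sqrt hkey
      exact one_div_le_one_div_of_le (Real.sqrt_pos.2 (hq_pos θ)) hsqrt_le
    have hmono := intervalIntegral.integral_mono_on (by positivity) hg_int hf_int hpt
    have hFTC := ftc_low b (b - a) sb sc hb hc hcb hsb2 hsc2 hsb0 hsc0 hscsb
    calc π / 2 * Real.log (Real.sqrt (b / a) + Real.sqrt (b / a - 1)) / Real.sqrt (b * (b - a))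
        = π/(4*(sb*sc)) * (Real.log (sb + sc) - Real.log (sb - sc)) := by
          rw [hratio, hratiob, hprodbc]
          have hplus : 0 < sb + sc := by linarith
          have hminus : 0 < sb - sc := by linarith
          have hlogseq : Real.log (sb + sc) - Real.log (sb - sc)
              = 2 * Real.log (sb / sa + sc / sa) := by
            have hmuleq : (sb + sc) * (sb - sc) = sa ^ 2 := by nlinarith
            have hlogmul : Real.log (sb + sc) + Real.log (sb - sc) = 2 * Real.log sa := by
              rw [← Real.log_mul hplus.ne' hminus.ne', hmuleq, Real.log_pow]
              push_cast; ring
            have hdiveq : sb / sa + sc / sa = (sb + sc) / sa := by ring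
            rw [hdiveq, Real.log_div hplus.ne' hsa0.ne']
            linarith
          rw [hlogseq]; ring
      _ ≤ _ := by rw [← hFTC]; exact hmono
  · -- UPPER BOUND
    have hden_pos : ∀ θ : ℝ, 0 < a + (b - a) * (2/π*θ) ^ 2 := fun θ => by positivity
    have hg_int : IntervalIntegrable (fun θ : ℝ => 1 / (a + (b - a) * (2/π*θ) ^ 2))
        MeasureTheory.volume 0 (π/2) := by
      apply Continuous.intervalIntegrable
      exact Continuous.div continuous_const
        (continuous_const.add (continuous_const.mul
          ((continuous_const.mul continuous_id).pow 2)))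
        (fun θ => (hden_pos θ).ne')
    have hpt : ∀ θ ∈ Set.Icc (0:ℝ) (π/2),
        1 / Real.sqrt (a ^ 2 * Real.cos θ ^ 2 + b ^ 2 * Real.sin θ ^ 2)
          ≤ 1 / (a + (b - a) * (2/π*θ) ^ 2) := by
      intro θ hθ
      obtain ⟨h0, h1⟩ := hθ
      have hx0 : 0 ≤ 2/π*θ := by positivity
      have hx1 : 2/π*θ ≤ 1 := by
        rw [div_mul_eq_mul_div, div_le_one hπ]; linarith
      have hjordan : 2/π*θ ≤ Real.sin θ := Real.mul_le_sin h0 h1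
      have hkey : (a + (b - a) * (2/π*θ) ^ 2) ^ 2
          ≤ a ^ 2 * Real.cos θ ^ 2 + b ^ 2 * Real.sin θ ^ 2 :=
        poly_up a b (2/π*θ) (Real.sin θ) (Real.cos θ) ha hab hx0 hx1 hjordan
          (Real.sin_le_one θ) (Real.sin_sq_add_cos_sq θ)
      have hdpos : 0 < a + (b - a) * (2/π*θ) ^ 2 := hden_pos θ
      have hsqrt_ge : a + (b - a) * (2/π*θ) ^ 2
          ≤ Real.sqrt (a ^ 2 * Real.cos θ ^ 2 + b ^ 2 * Real.sin θ ^ 2) := by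
        rw [show a + (b - a) * (2/π*θ) ^ 2
            = Real.sqrt ((a + (b - a) * (2/π*θ) ^ 2) ^ 2) from
          (Real.sqrt_sq hdpos.le).symm]
        exact Real.sqrt_le_sqrt hkey
      exact one_div_le_one_div_of_le hdpos hsqrt_ge
    have hmono := intervalIntegral.integral_mono_on (by positivity) hf_int hg_int hpt
    have hFTC := ftc_up a (b - a) sa sc ha hc hsa2 hsc2 hsa0 hsc0
    calc (∫ θ in (0:ℝ)..(π/2),
          1 / Real.sqrt (a ^ 2 * Real.cos θ ^ 2 + b ^ 2 * Real.sin θ ^ 2))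
        ≤ ∫ θ in (0:ℝ)..(π/2), 1 / (a + (b - a) * (2/π*θ) ^ 2) := hmono
      _ = π / 2 * Real.arctan (Real.sqrt (b / a - 1)) / Real.sqrt (a * (b - a)) := by
          rw [hFTC, hratio, hprodac]; ring
end

section
/- For every positive integer i, one has 4^i/√(π(i + 1/2)) < C(2i, i) < 4^i/√(π(i + 1/4)), where C(2i, i) denotes the central binomial coefficient. -/
open Real Filter Finset

noncomputable def Abc (k : ℕ) : ℝ := (Nat.choose (2 * k) k : ℝ) / 4 ^ k

lemma Abc_pos (k : ℕ) : 0 < Abc k := by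
  apply div_pos _ (by positivity)
  exact_mod_cast Nat.choose_pos (by omega)

lemma Abc_succ (k : ℕ) : Abc (k + 1) = Abc k * ((2 * k + 1) / (2 * k + 2)) := by
  have h := Nat.succ_mul_centralBinom_succ k
  simp only [Nat.centralBinom] at h
  have h' : ((k : ℝ) + 1) * (Nat.choose (2 * (k + 1)) (k + 1) : ℝ)
      = 2 * (2 * k + 1) * (Nat.choose (2 * k) k : ℝ) := by exact_mod_cast h
  unfold Abc
  have hk1 : (k : ℝ) + 1 ≠ 0 := by positivity
  rw [pow_succ]
  field_simp
  linear_combination 2 * h'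

noncomputable def W (k : ℕ) : ℝ :=
  ∏ i ∈ Finset.range k, ((2 : ℝ) * i + 2) / (2 * i + 1) * ((2 * i + 2) / (2 * i + 3))

lemma W_pos (k : ℕ) : 0 < W k := by
  apply Finset.prod_pos
  intro i _
  positivity

lemma W_Abc (k : ℕ) : W k * Abc k ^ 2 * (2 * k + 1) = 1 := by
  induction k with
  | zero => simp [W, Abc]
  | succ n ih =>
    have hW : W (n + 1) = W n * (((2 : ℝ) * n + 2) / (2 * n + 1) * ((2 * n + 2) / (2 * n + 3))) := by
      unfold W; rw [Finset.prod_range_succ]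
    have h1 : (2 * (n : ℝ) + 1) ≠ 0 := by positivity
    have h2 : (2 * (n : ℝ) + 2) ≠ 0 := by positivity
    have h3 : (2 * (n : ℝ) + 3) ≠ 0 := by positivity
    have key : W (n + 1) * Abc (n + 1) ^ 2 * (2 * ((n : ℝ) + 1) + 1)
        = W n * Abc n ^ 2 * (2 * n + 1) := by
      rw [hW, Abc_succ n]
      field_simp
      ring
    push_cast
    rw [key, ih]

lemma f_eq (k : ℕ) : Abc k ^ 2 * (k + 1 / 2) = 1 / (2 * W k) := by
  have h := W_Abc k
  have hW := W_pos k
  field_simp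
  nlinarith [h]

lemma f_tendsto : Tendsto (fun k => Abc k ^ 2 * (k + 1 / 2)) atTop (nhds (1 / π)) := by
  have h2 : Tendsto (fun k => 2 * W k) atTop (nhds π) := by
    have := Real.tendsto_prod_pi_div_two.const_mul 2
    have e : 2 * (π / 2) = π := by ring
    rw [e] at this
    simpa [W] using this
  have h : Tendsto (fun k => 1 / (2 * W k)) atTop (nhds (1 / π)) :=
    tendsto_const_nhds.div h2 pi_ne_zero
  have he : (fun k : ℕ => Abc k ^ 2 * (k + 1 / 2)) = fun k => 1 / (2 * W k) := funext f_eq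
  rw [he]; exact h

lemma f_strict_anti (k : ℕ) : Abc (k + 1) ^ 2 * ((k + 1 : ℕ) + 1 / 2) < Abc k ^ 2 * (k + 1 / 2) := by
  rw [Abc_succ k]
  have hA := Abc_pos k
  push_cast
  rw [mul_pow, div_pow]
  rw [show Abc k ^ 2 * ((2 * (k:ℝ) + 1) ^ 2 / (2 * k + 2) ^ 2) * ((k:ℝ) + 1 + 1 / 2)
      = Abc k ^ 2 * (2 * (k:ℝ) + 1) ^ 2 * ((k:ℝ) + 1 + 1 / 2) / (2 * k + 2) ^ 2 from by ring]
  rw [div_lt_iff₀ (by positivity)]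
  nlinarith [sq_nonneg (Abc k), Abc_pos k]

lemma g_strict_mono (k : ℕ) : Abc k ^ 2 * (k + 1 / 4) < Abc (k + 1) ^ 2 * ((k + 1 : ℕ) + 1 / 4) := by
  rw [Abc_succ k]
  have hA := Abc_pos k
  push_cast
  rw [mul_pow, div_pow]
  rw [show Abc k ^ 2 * ((2 * (k:ℝ) + 1) ^ 2 / (2 * k + 2) ^ 2) * ((k:ℝ) + 1 + 1 / 4)
      = Abc k ^ 2 * (2 * (k:ℝ) + 1) ^ 2 * ((k:ℝ) + 1 + 1 / 4) / (2 * k + 2) ^ 2 from by ring]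
  rw [lt_div_iff₀ (by positivity)]
  nlinarith [sq_nonneg (Abc k), Abc_pos k]

lemma f_anti : ∀ a b : ℕ, a ≤ b → Abc b ^ 2 * (b + 1 / 2) ≤ Abc a ^ 2 * (a + 1 / 2) := by
  intro a b hab
  induction b with
  | zero =>
    have : a = 0 := by omega
    subst this; exact le_refl _
  | succ n ih =>
    rcases Nat.lt_or_ge a (n + 1) with h | h
    · exact le_trans (le_of_lt (f_strict_anti n)) (ih (by omega))
    · have : a = n + 1 := by omega
      subst this; exact le_refl _

lemma g_mono : ∀ a b : ℕ, a ≤ b → Abc a ^ 2 * (a + 1 / 4) ≤ Abc b ^ 2 * (b + 1 / 4) := by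
  intro a b hab
  induction b with
  | zero =>
    have : a = 0 := by omega
    subst this; exact le_refl _
  | succ n ih =>
    rcases Nat.lt_or_ge a (n + 1) with h | h
    · exact le_trans (ih (by omega)) (le_of_lt (g_strict_mono n))
    · have : a = n + 1 := by omega
      subst this; exact le_refl _

lemma f_gt (k : ℕ) : 1 / π < Abc k ^ 2 * (k + 1 / 2) := by
  have h1 : 1 / π ≤ Abc (k + 1) ^ 2 * ((k + 1 : ℕ) + 1 / 2) := by
    apply le_of_tendsto f_tendsto
    filter_upwards [eventually_ge_atTop (k + 1)] with m hm
    exact f_anti (k + 1) m hm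
  exact lt_of_le_of_lt h1 (f_strict_anti k)

lemma g_lt (k : ℕ) : Abc k ^ 2 * (k + 1 / 4) < 1 / π := by
  have h1 : Abc (k + 1) ^ 2 * ((k + 1 : ℕ) + 1 / 4) ≤ 1 / π := by
    apply ge_of_tendsto f_tendsto
    filter_upwards [eventually_ge_atTop (k + 1)] with m hm
    calc Abc (k + 1) ^ 2 * ((k + 1 : ℕ) + 1 / 4) ≤ Abc m ^ 2 * (m + 1 / 4) := g_mono _ _ hm
      _ ≤ Abc m ^ 2 * (m + 1 / 2) := by nlinarith [sq_nonneg (Abc m)]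
  exact lt_of_lt_of_le (g_strict_mono k) h1

theorem stmt_5 (i : ℕ) (hi : 0 < i) :
    (4:ℝ) ^ i / Real.sqrt (π * (i + 1 / 2)) < (Nat.choose (2 * i) i : ℝ) ∧
    (Nat.choose (2 * i) i : ℝ) < (4:ℝ) ^ i / Real.sqrt (π * (i + 1 / 4)) := by
  have hA : (Nat.choose (2 * i) i : ℝ) = Abc i * 4 ^ i := by
    unfold Abc; field_simp
  have hApos := Abc_pos i
  have hCpos : (0:ℝ) < (Nat.choose (2 * i) i : ℝ) := by
    exact_mod_cast Nat.choose_pos (by omega)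
  have hpi := Real.pi_pos
  have hx : (0:ℝ) < π * (i + 1 / 2) := by positivity
  have hy : (0:ℝ) < π * (i + 1 / 4) := by positivity
  have hsx : (0:ℝ) < Real.sqrt (π * (i + 1 / 2)) := Real.sqrt_pos.mpr hx
  have hsy : (0:ℝ) < Real.sqrt (π * (i + 1 / 4)) := Real.sqrt_pos.mpr hy
  have hf := f_gt i
  have hg := g_lt i
  constructor
  · rw [div_lt_iff₀ hsx]
    apply lt_of_pow_lt_pow_left₀ 2 (by positivity)
    rw [mul_pow, Real.sq_sqrt hx.le]
    have h1 : 1 < Abc i ^ 2 * (i + 1 / 2) * π := by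
      rw [div_lt_iff₀ hpi] at hf; linarith
    calc ((4:ℝ) ^ i) ^ 2 = 1 * ((4:ℝ) ^ i) ^ 2 := by ring
      _ < (Abc i ^ 2 * (i + 1 / 2) * π) * ((4:ℝ) ^ i) ^ 2 :=
          mul_lt_mul_of_pos_right h1 (by positivity)
      _ = (Abc i * 4 ^ i) ^ 2 * (π * (i + 1 / 2)) := by ring
      _ = (Nat.choose (2 * i) i : ℝ) ^ 2 * (π * (i + 1 / 2)) := by rw [hA]
  · rw [lt_div_iff₀ hsy]
    apply lt_of_pow_lt_pow_left₀ 2 (by positivity)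
    rw [mul_pow, Real.sq_sqrt hy.le]
    have h1 : Abc i ^ 2 * (i + 1 / 4) * π < 1 := by
      rw [lt_div_iff₀ hpi] at hg; linarith
    calc (Nat.choose (2 * i) i : ℝ) ^ 2 * (π * (i + 1 / 4))
        = (Abc i ^ 2 * (i + 1 / 4) * π) * ((4:ℝ) ^ i) ^ 2 := by rw [hA]; ring
      _ < 1 * ((4:ℝ) ^ i) ^ 2 := mul_lt_mul_of_pos_right h1 (by positivity)
      _ = ((4:ℝ) ^ i) ^ 2 := by ring
end

section
/- For all real t with 0 < t < 1, one has E(t) = (π/2)·[1 − ∑_{i=1}^∞ (1/(4^{2i}(2i−1)))·C(2i, i)²·t^{2i}], where C(2i, i) denotes the central binomial coefficient. -/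
open Real

noncomputable def myA (n : ℕ) : ℝ := (Nat.choose (2*n) n : ℝ) / ((1 - 2*(n:ℝ)) * 4^n)

lemma myA_zero : myA 0 = 1 := by simp [myA]

lemma denom_ne (n : ℕ) : (1 : ℝ) - 2*(n:ℕ) ≠ 0 := by
  rcases n with _ | m
  · norm_num
  · push_cast; nlinarith [Nat.cast_nonneg (α := ℝ) m]

lemma recA (n : ℕ) : ((n:ℝ)+1) * myA (n+1) = ((n:ℝ) - 1/2) * myA n := by
  have key := Nat.succ_mul_centralBinom_succ n
  have key' : ((n:ℝ)+1) * (Nat.choose (2*(n+1)) (n+1) : ℝ)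
      = 2*(2*(n:ℝ)+1) * (Nat.choose (2*n) n : ℝ) := by
    have : (2*(n+1)).choose (n+1) = Nat.centralBinom (n+1) := rfl
    rw [this]
    have h2 : (2*n).choose n = Nat.centralBinom n := rfl
    rw [h2]
    exact_mod_cast congrArg (Nat.cast (R := ℝ)) key
  have h1 : (1:ℝ) - 2*((n:ℕ):ℝ) ≠ 0 := denom_ne n
  have h2 : (1:ℝ) - 2*(((n+1:ℕ)):ℝ) ≠ 0 := denom_ne (n+1)
  push_cast at h2
  simp only [myA]
  push_cast
  field_simp
  rw [div_eq_div_iff (by contrapose! h2; linarith) (by contrapose! h1; linarith)]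
  have e1 : 2*(n+1) = 2 + n*2 := by ring
  have e2 : n+1 = 1+n := by ring
  have e3 : 2*n = n*2 := by ring
  rw [e1, e2, e3] at key'
  ring_nf
  linear_combination (2*(1-2*(n:ℝ))*4^n) * key'

lemma choose_le_four (n : ℕ) : ((2*n).choose n : ℝ) ≤ 4^n := by
  have h : (2*n).choose n ≤ 4^n := by
    calc (2*n).choose n ≤ ∑ i ∈ Finset.range (2*n+1), (2*n).choose i :=
          Finset.single_le_sum (fun i _ => Nat.zero_le _) (by simp [Finset.mem_range]; omega)
    _ = 2^(2*n) := Nat.sum_range_choose (2*n)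
    _ = 4^n := by rw [pow_mul]; norm_num
  exact_mod_cast h

lemma absA (n : ℕ) : |myA n| ≤ 1 := by
  have h4 : (0:ℝ) < 4^n := by positivity
  have hd : (1:ℝ) ≤ |1 - 2*(n:ℝ)| := by
    rcases n with _ | m
    · simp
    · rw [abs_of_nonpos (by push_cast; nlinarith [Nat.cast_nonneg (α := ℝ) m])]
      push_cast; nlinarith [Nat.cast_nonneg (α := ℝ) m]
  have hc : (0:ℝ) ≤ ((2*n).choose n : ℝ) := Nat.cast_nonneg _
  rw [myA, abs_div, abs_mul, abs_of_pos h4, abs_of_nonneg hc, div_le_one (by nlinarith)]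
  calc ((2*n).choose n : ℝ) ≤ 4^n := choose_le_four n
    _ ≤ |1 - 2*(n:ℝ)| * 4^n := by nlinarith

noncomputable def myS (z : ℝ) : ℝ := ∑' n, myA n * z^n
noncomputable def myT (z : ℝ) : ℝ := ∑' n, myA n * ((n:ℝ) * z^(n-1))

lemma summable_myA_pow {y : ℝ} (hy : |y| < 1) : Summable (fun n => myA n * y^n) := by
  apply Summable.of_norm_bounded (g := fun n => |y|^n)
    (summable_geometric_of_lt_one (abs_nonneg y) hy)
  intro n
  rw [norm_mul, norm_pow, Real.norm_eq_abs, Real.norm_eq_abs]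
  calc |myA n| * |y|^n ≤ 1 * |y|^n :=
        mul_le_mul_of_nonneg_right (absA n) (by positivity)
  _ = |y|^n := one_mul _

lemma summable_myT {r y : ℝ} (hr0 : 0 < r) (hr1 : r < 1) (hy : y ∈ Set.Ioo (-r) r) :
    Summable (fun n => myA n * ((n:ℝ) * y^(n-1))) := by
  apply Summable.of_norm_bounded (g := fun n : ℕ => r⁻¹ * ((n:ℝ)^1 * r^n))
  · exact (summable_pow_mul_geometric_of_norm_lt_one 1
      (by rw [Real.norm_eq_abs, abs_of_pos hr0]; exact hr1)).mul_left r⁻¹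
  · intro n
    have hyr : |y| ≤ r := le_of_lt (abs_lt.2 ⟨hy.1, hy.2⟩)
    rcases n with _ | m
    · simp
    · have he : r⁻¹ * (((m+1:ℕ):ℝ)^1 * r^(m+1)) = ((m+1:ℕ):ℝ) * r^m := by
        field_simp
        ring
      rw [he, norm_mul, norm_mul, norm_pow, Real.norm_eq_abs, Real.norm_eq_abs,
        Real.norm_eq_abs]
      have h1 : |y|^(m+1-1) ≤ r^m := by
        simpa using pow_le_pow_left₀ (abs_nonneg y) hyr m
      have h2 : |((m+1:ℕ):ℝ)| = ((m+1:ℕ):ℝ) := abs_of_nonneg (Nat.cast_nonneg _)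
      calc |myA (m+1)| * (|((m+1:ℕ):ℝ)| * |y|^(m+1-1))
          ≤ 1 * (((m+1:ℕ):ℝ) * r^m) := by
            apply mul_le_mul (absA _) ?_ (by positivity) zero_le_one
            rw [h2]
            exact mul_le_mul_of_nonneg_left h1 (Nat.cast_nonneg _)
      _ = ((m+1:ℕ):ℝ) * r^m := one_mul _

lemma hasDerivAt_myS {r y : ℝ} (hr0 : 0 < r) (hr1 : r < 1) (hy : y ∈ Set.Ioo (-r) r) :
    HasDerivAt myS (myT y) y := by
  have h0 : (0:ℝ) ∈ Set.Ioo (-r) r := ⟨neg_lt_zero.2 hr0, hr0⟩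
  have hg0 : Summable (fun n => myA n * (0:ℝ)^n) := by
    apply summable_of_ne_finset_zero (s := {0})
    intro n hn
    simp only [Finset.mem_singleton] at hn
    simp [zero_pow hn]
  exact hasDerivAt_tsum_of_isPreconnected
    ((summable_pow_mul_geometric_of_norm_lt_one 1
      (by rw [Real.norm_eq_abs, abs_of_pos hr0]; exact hr1)).mul_left r⁻¹)
    isOpen_Ioo (convex_Ioo _ _).isPreconnected
    (fun n z _ => (hasDerivAt_pow n z).const_mul (myA n))
    (fun n z hz => by
      have := summable_myT hr0 hr1 hz
      -- reuse bound from summable_myT proof: redo bound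
      have hyr : |z| ≤ r := le_of_lt (abs_lt.2 ⟨hz.1, hz.2⟩)
      rcases n with _ | m
      · simp
      · have he : r⁻¹ * (((m+1:ℕ):ℝ)^1 * r^(m+1)) = ((m+1:ℕ):ℝ) * r^m := by
          field_simp; ring
        rw [he, norm_mul, norm_mul, norm_pow, Real.norm_eq_abs, Real.norm_eq_abs,
          Real.norm_eq_abs]
        have h1 : |z|^(m+1-1) ≤ r^m := by
          simpa using pow_le_pow_left₀ (abs_nonneg z) hyr m
        have h2 : |((m+1:ℕ):ℝ)| = ((m+1:ℕ):ℝ) := abs_of_nonneg (Nat.cast_nonneg _)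
        calc |myA (m+1)| * (|((m+1:ℕ):ℝ)| * |z|^(m+1-1))
            ≤ 1 * (((m+1:ℕ):ℝ) * r^m) := by
              apply mul_le_mul (absA _) ?_ (by positivity) zero_le_one
              rw [h2]
              exact mul_le_mul_of_nonneg_left h1 (Nat.cast_nonneg _)
        _ = ((m+1:ℕ):ℝ) * r^m := one_mul _)
    h0 hg0 hy

lemma key_ode {r y : ℝ} (hr0 : 0 < r) (hr1 : r < 1) (hy : y ∈ Set.Ioo (-r) r) :
    (1 - y) * myT y + myS y / 2 = 0 := by
  have hf : Summable (fun n => myA n * ((n:ℝ) * y^(n-1))) := summable_myT hr0 hr1 hy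
  have hyabs : |y| < 1 := lt_trans (abs_lt.2 ⟨hy.1, hy.2⟩) hr1
  have hg : Summable (fun n => myA n * y^n) := summable_myA_pow hyabs
  have hmul : ∀ n : ℕ, y * (myA n * ((n:ℝ) * y^(n-1))) = myA n * ((n:ℝ) * y^n) := by
    intro n
    rcases n with _ | m
    · simp
    · simp only [Nat.add_sub_cancel, pow_succ]
      push_cast
      ring
  have h1 : myT y = ∑' n, myA (n+1) * (((n:ℝ)+1) * y^n) := by
    rw [myT, Summable.tsum_eq_zero_add hf]
    push_cast
    simp
  have h2 : y * myT y = ∑' n, myA n * ((n:ℝ) * y^n) := by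
    rw [myT, ← tsum_mul_left]
    exact tsum_congr hmul
  have h3 : myS y / 2 = ∑' n, (myA n * y^n)/2 := (tsum_div_const).symm
  have hS1 : Summable (fun n => myA (n+1) * (((n:ℝ)+1) * y^n)) := by
    have h := (summable_nat_add_iff 1).2 hf
    apply h.congr
    intro n
    push_cast
    simp
  have hS2 : Summable (fun n => myA n * ((n:ℝ) * y^n)) := (hf.mul_left y).congr hmul
  have hS3 : Summable (fun n => (myA n * y^n)/2) := hg.div_const 2
  calc (1-y) * myT y + myS y / 2 = myT y - y * myT y + myS y / 2 := by ring
  _ = ∑' n, (myA (n+1) * (((n:ℝ)+1) * y^n) - myA n * ((n:ℝ)*y^n) + (myA n * y^n)/2) := by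
      rw [h2, h1, h3, ← Summable.tsum_sub hS1 hS2, ← Summable.tsum_add (hS1.sub hS2) hS3]
  _ = ∑' _ : ℕ, (0:ℝ) := tsum_congr (fun n => by linear_combination y^n * recA n)
  _ = 0 := tsum_zero

lemma hasSum_sqrt {x : ℝ} (hx0 : 0 ≤ x) (hx1 : x < 1) :
    HasSum (fun n => myA n * x^n) (Real.sqrt (1-x)) := by
  set r : ℝ := (1+x)/2 with hrdef
  have hr0 : 0 < r := by rw [hrdef]; linarith
  have hxr : x < r := by rw [hrdef]; linarith
  have hr1 : r < 1 := by rw [hrdef]; linarith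
  have hsub : Set.Icc (0:ℝ) x ⊆ Set.Ioo (-r) r := by
    intro y hy
    exact ⟨by linarith [hy.1], by linarith [hy.2]⟩
  have hScont : ContinuousOn myS (Set.Icc 0 x) := fun y hy =>
    ((hasDerivAt_myS hr0 hr1 (hsub hy)).continuousAt).continuousWithinAt
  set F : ℝ → ℝ := fun z => myS z / Real.sqrt (1 - z) with hFdef
  have hFc : ContinuousOn F (Set.Icc 0 x) := by
    apply hScont.div
    · exact (Real.continuous_sqrt.comp (continuous_const.sub continuous_id)).continuousOn
    · intro y hy
      have : (0:ℝ) < 1 - y := by linarith [hy.2]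
      exact (Real.sqrt_pos.2 this).ne'
  have hFd : ∀ y ∈ Set.Ico 0 x, HasDerivWithinAt F 0 (Set.Ici y) y := by
    intro y hy
    have hyI : y ∈ Set.Ioo (-r) r := hsub ⟨hy.1, le_of_lt hy.2⟩
    have h1y : (0:ℝ) < 1 - y := by linarith [hy.2]
    have hsq : HasDerivAt (fun z : ℝ => Real.sqrt (1 - z)) (1/(2*Real.sqrt (1-y)) * (-1)) y := by
      have hinner : HasDerivAt (fun z : ℝ => 1 - z) (-1) y := by
        simpa using (hasDerivAt_id y).const_sub 1
      have := (Real.hasDerivAt_sqrt h1y.ne').comp y hinner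
      simpa [Function.comp_def] using this
    have hne : Real.sqrt (1-y) ≠ 0 := (Real.sqrt_pos.2 h1y).ne'
    have hD := (hasDerivAt_myS hr0 hr1 hyI).div hsq hne
    have hkey := key_ode hr0 hr1 hyI
    have hs2 : (Real.sqrt (1-y))^2 = 1 - y := Real.sq_sqrt h1y.le
    have hval : (myT y * Real.sqrt (1-y) - myS y * (1/(2*Real.sqrt (1-y)) * -1))
        / (Real.sqrt (1-y))^2 = 0 := by
      rw [div_eq_zero_iff]
      left
      field_simp
      linear_combination 2*hkey + (2*myT y)*hs2
    rw [hval] at hD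
    exact hD.hasDerivWithinAt
  have hcon := constant_of_has_deriv_right_zero hFc hFd x (Set.right_mem_Icc.2 hx0)
  have hS0 : myS 0 = 1 := by
    rw [myS, tsum_eq_single 0 (fun b hb => by simp [zero_pow hb])]
    simp [myA_zero]
  have hF0 : F 0 = 1 := by
    rw [hFdef]
    simp [hS0]
  rw [hF0] at hcon
  have hne : Real.sqrt (1-x) ≠ 0 := (Real.sqrt_pos.2 (by linarith)).ne'
  have hSx : myS x = Real.sqrt (1-x) := by
    have := hcon
    rw [hFdef] at this
    simp only at this
    field_simp at this
    linarith [this]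
  have hsum : Summable (fun n => myA n * x^n) := summable_myA_pow (by rwa [abs_of_nonneg hx0])
  have := hsum.hasSum
  rwa [show ∑' n, myA n * x^n = Real.sqrt (1-x) from hSx] at this

lemma prod_ident (n : ℕ) : ∏ i ∈ Finset.range n, (2*(i:ℝ)+1)/(2*(i:ℝ)+2)
    = ((2*n).choose n : ℝ)/4^n := by
  induction n with
  | zero => simp
  | succ m ih =>
    rw [Finset.prod_range_succ, ih]
    have key := Nat.succ_mul_centralBinom_succ m
    have key' : ((m:ℝ)+1) * ((2*(m+1)).choose (m+1) : ℝ)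
        = 2*(2*(m:ℝ)+1) * ((2*m).choose m : ℝ) := by
      have e1 : (2*(m+1)).choose (m+1) = Nat.centralBinom (m+1) := rfl
      have e2 : (2*m).choose m = Nat.centralBinom m := rfl
      rw [e1, e2]
      exact_mod_cast congrArg (Nat.cast (R := ℝ)) key
    rw [div_mul_div_comm, div_eq_div_iff (by positivity) (by positivity)]
    linear_combination (-2*(4:ℝ)^m) * key'

lemma wallis_half (n : ℕ) : ∫ θ in (0:ℝ)..(π/2), Real.sin θ^(2*n)
    = (π/2) * (((2*n).choose n : ℝ)/4^n) := by
  have hc : Continuous (fun x : ℝ => Real.sin x ^ (2*n)) := Real.continuous_sin.pow _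
  have h2 : ∫ x in (π/2:ℝ)..π, Real.sin x^(2*n) = ∫ x in (0:ℝ)..(π/2), Real.sin x^(2*n) := by
    have h := intervalIntegral.integral_comp_sub_left (a := 0) (b := π/2)
      (fun x => Real.sin x ^ (2*n)) π
    simp only [Real.sin_pi_sub, sub_zero] at h
    rw [show π - π/2 = π/2 by ring] at h
    exact h.symm
  have h3 := intervalIntegral.integral_add_adjacent_intervals (a := (0:ℝ)) (b := π/2) (c := π)
    (hc.intervalIntegrable (μ := MeasureTheory.volume) _ _) (hc.intervalIntegrable (μ := MeasureTheory.volume) _ _)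
  have h4 := integral_sin_pow_even n
  rw [prod_ident] at h4
  rw [h2] at h3
  linarith [h3, h4]


theorem stmt_7 (t : ℝ) (ht0 : 0 < t) (ht1 : t < 1) :
    (∫ θ in (0:ℝ)..(π / 2), Real.sqrt (1 - t ^ 2 * Real.sin θ ^ 2))
      = (π / 2) * (1 - ∑' i : ℕ,
          (1 / ((4:ℝ) ^ (2 * (i + 1)) * (2 * (i + 1) - 1)))
            * (Nat.choose (2 * (i + 1)) (i + 1) : ℝ) ^ 2 * t ^ (2 * (i + 1))) := by
  have hπ : (0:ℝ) < π := Real.pi_pos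
  have h02 : (0:ℝ) ≤ π/2 := by linarith
  set μ := MeasureTheory.volume.restrict (Set.Ioc (0:ℝ) (π/2)) with hμ
  set F : ℕ → ℝ → ℝ := fun n θ => myA n * (t^2 * Real.sin θ^2)^n with hF
  have ht2 : t^2 < 1 := by nlinarith
  have hptws : ∀ θ : ℝ, HasSum (fun n => F n θ) (Real.sqrt (1 - t^2 * Real.sin θ^2)) := by
    intro θ
    apply hasSum_sqrt (by positivity)
    have hs : Real.sin θ^2 ≤ 1 := Real.sin_sq_le_one θ
    nlinarith [sq_nonneg t, sq_nonneg (Real.sin θ)]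
  have hFint : ∀ n, MeasureTheory.Integrable (F n) μ := by
    intro n
    rw [hμ]
    apply Continuous.integrableOn_Ioc
    exact continuous_const.mul ((continuous_const.mul (Real.continuous_sin.pow 2)).pow n)
  have hfin : MeasureTheory.IsFiniteMeasure μ := by
    constructor
    rw [hμ, MeasureTheory.Measure.restrict_apply_univ, Real.volume_Ioc, sub_zero]
    exact ENNReal.ofReal_lt_top
  have hμuniv : (μ Set.univ).toReal = π/2 := by
    rw [hμ, MeasureTheory.Measure.restrict_apply_univ, Real.volume_Ioc, sub_zero,
      ENNReal.toReal_ofReal h02]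
  have hbound : ∀ n θ, ‖F n θ‖ ≤ (t^2)^n := by
    intro n θ
    rw [hF]
    simp only [norm_mul, norm_pow, Real.norm_eq_abs, sq_abs]
    have hu0 : (0:ℝ) ≤ t^2 * Real.sin θ^2 := by positivity
    have hu1 : t^2 * Real.sin θ^2 ≤ t^2 := by
      nlinarith [Real.sin_sq_le_one θ, sq_nonneg t]
    calc |myA n| * (t^2 * Real.sin θ^2)^n ≤ 1 * (t^2)^n := by
          apply mul_le_mul (absA n) ?_ (by positivity) zero_le_one
          exact pow_le_pow_left₀ hu0 hu1 n
    _ = (t^2)^n := one_mul _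
  have hsummable : Summable (fun n => ∫ θ, ‖F n θ‖ ∂μ) := by
    apply Summable.of_nonneg_of_le
      (fun n => MeasureTheory.integral_nonneg fun θ => norm_nonneg _)
      (fun n => ?_)
    · exact ((summable_geometric_of_lt_one (by positivity) ht2).mul_right (π/2))
    · calc (∫ θ, ‖F n θ‖ ∂μ) ≤ ∫ _, (t^2)^n ∂μ := by
            apply MeasureTheory.integral_mono ((hFint n).norm)
              (MeasureTheory.integrable_const _)
            intro θ
            exact hbound n θ
      _ = (t^2)^n * (π/2) := by
            rw [MeasureTheory.integral_const, MeasureTheory.measureReal_def, hμuniv, smul_eq_mul]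
            ring
  have hswap := MeasureTheory.hasSum_integral_of_summable_integral_norm hFint hsummable
  have hlhs : (∫ θ in (0:ℝ)..(π/2), Real.sqrt (1 - t^2 * Real.sin θ^2))
      = ∫ θ, (∑' n, F n θ) ∂μ := by
    rw [intervalIntegral.integral_of_le h02, hμ]
    refine MeasureTheory.integral_congr_ae (Filter.Eventually.of_forall fun θ => ?_)
    exact ((hptws θ).tsum_eq).symm
  have hval : ∀ n, (∫ θ, F n θ ∂μ)
      = myA n * t^(2*n) * ((π/2) * (((2*n).choose n : ℝ)/4^n)) := by
    intro n
    have hpt : ∀ θ, F n θ = (myA n * t^(2*n)) * Real.sin θ^(2*n) := by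
      intro θ
      rw [hF]
      simp only
      rw [mul_pow, ← pow_mul, ← pow_mul]
      ring
    calc (∫ θ, F n θ ∂μ) = ∫ θ, (myA n * t^(2*n)) * Real.sin θ^(2*n) ∂μ :=
          MeasureTheory.integral_congr_ae (Filter.Eventually.of_forall hpt)
    _ = (myA n * t^(2*n)) * ∫ θ, Real.sin θ^(2*n) ∂μ := MeasureTheory.integral_const_mul _ _
    _ = myA n * t^(2*n) * ((π/2) * (((2*n).choose n : ℝ)/4^n)) := by
          rw [hμ, ← intervalIntegral.integral_of_le h02, wallis_half]
  rw [show (fun n => ∫ θ, F n θ ∂μ)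
      = fun n => myA n * t^(2*n) * ((π/2) * (((2*n).choose n : ℝ)/4^n)) from funext hval] at hswap
  have hmain : (∫ θ in (0:ℝ)..(π/2), Real.sqrt (1 - t^2 * Real.sin θ^2))
      = ∑' n, myA n * t^(2*n) * ((π/2) * (((2*n).choose n : ℝ)/4^n)) := by
    rw [hlhs]
    exact hswap.tsum_eq.symm
  rw [hmain, Summable.tsum_eq_zero_add hswap.summable]
  have hg0 : myA 0 * t^(2*0) * ((π/2) * (((2*0).choose 0 : ℝ)/4^0)) = π/2 := by
    simp [myA_zero]
  rw [hg0]
  have hterm : ∀ n : ℕ, myA (n+1) * t^(2*(n+1)) * ((π/2) * (((2*(n+1)).choose (n+1) : ℝ)/4^(n+1)))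
      = (π/2) * -((1 / ((4:ℝ) ^ (2 * (n + 1)) * (2 * ((n:ℝ) + 1) - 1)))
          * (Nat.choose (2 * (n + 1)) (n + 1) : ℝ) ^ 2 * t ^ (2 * (n + 1))) := by
    intro n
    have hd : (1:ℝ) - 2*(((n+1:ℕ)):ℝ) ≠ 0 := denom_ne (n+1)
    push_cast at hd
    have h2 : 2*((n:ℝ)+1) - 1 ≠ 0 := fun h => hd (by linarith)
    have h41 : ((4:ℝ))^(n+1) ≠ 0 := by positivity
    have h42 : ((4:ℝ))^(2*(n+1)) ≠ 0 := by positivity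
    rw [myA]
    push_cast
    rw [show (4:ℝ)^(2*(n+1)) = (4^(n+1))^2 by rw [← pow_mul]; ring_nf]
    field_simp
    ring
  rw [tsum_congr hterm, tsum_mul_left, tsum_neg]
  ring
end

section
/- For all real t with 0 < t < 1, one has π/2 − 2·∑_{i=1}^∞ t^{2i}/((2i−1)(4i+1)) < E(t) < π/2 − ∑_{i=1}^∞ t^{2i}/((2i−1)(2i+1)). -/
open Real Finset Filter MeasureTheory intervalIntegral
open scoped Topology

namespace Stmt8Aux

lemma conv_sq (y : ℝ) (hy : 0 ≤ y) (N : ℕ) :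
    ∑ n ∈ range N, (catalan (n+1) : ℝ) * y ^ (n+2)
      ≤ (∑ n ∈ range N, (catalan n : ℝ) * y ^ (n+1)) ^ 2 := by
  have hconv : ∀ n, (catalan (n+1) : ℝ) * y ^ (n+2)
      = ∑ ij ∈ Finset.HasAntidiagonal.antidiagonal n,
          ((catalan ij.1 : ℝ) * y ^ (ij.1+1)) * ((catalan ij.2 : ℝ) * y ^ (ij.2+1)) := by
    intro n
    rw [catalan_succ']
    push_cast
    rw [Finset.sum_mul]
    refine Finset.sum_congr rfl fun ij hij => ?_
    have : ij.1 + ij.2 = n := Finset.HasAntidiagonal.mem_antidiagonal.mp hij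
    rw [← this]
    ring
  simp_rw [hconv]
  rw [sq, Finset.sum_mul_sum, ← Finset.sum_product']
  rw [← Finset.sum_biUnion]
  · apply Finset.sum_le_sum_of_subset_of_nonneg
    · intro p hp
      simp only [Finset.mem_biUnion, Finset.mem_range] at hp
      obtain ⟨n, hn, hpn⟩ := hp
      have := Finset.HasAntidiagonal.mem_antidiagonal.mp hpn
      simp only [Finset.mem_product, Finset.mem_range]
      omega
    · intro p _ _
      positivity
  · intro a _ b _ hab
    simp only [Finset.disjoint_left]
    intro p hpa hpb
    exact hab ((Finset.HasAntidiagonal.mem_antidiagonal.mp hpa).symm.trans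
      (Finset.HasAntidiagonal.mem_antidiagonal.mp hpb))

lemma catalan_hasSum {y : ℝ} (hy0 : 0 ≤ y) (hy : y < 1/4) :
    HasSum (fun n => (catalan n : ℝ) * y ^ (n+1)) ((1 - Real.sqrt (1 - 4*y)) / 2) := by
  set s := Real.sqrt (1 - 4*y) with hs_def
  have hs_sq : s ^ 2 = 1 - 4*y := Real.sq_sqrt (by linarith)
  have hs_pos : 0 < s := Real.sqrt_pos.mpr (by linarith)
  have hs_le : s ≤ 1 := by
    have h1 : s ≤ Real.sqrt 1 := Real.sqrt_le_sqrt (by linarith)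
    simpa using h1
  set rt := (1 - s) / 2 with hrt_def
  have hrt_nonneg : 0 ≤ rt := by rw [hrt_def]; linarith
  have hrt_lt : rt < 1/2 := by rw [hrt_def]; linarith
  have hrt_eq : rt = y + rt ^ 2 := by
    rw [hrt_def]; nlinarith [hs_sq]
  have hnonneg : ∀ n, 0 ≤ (catalan n : ℝ) * y ^ (n+1) := by
    intro n; positivity
  -- partial sums bounded by rt
  have hbound : ∀ N, ∑ n ∈ range N, (catalan n : ℝ) * y ^ (n+1) ≤ rt := by
    intro N
    induction N with
    | zero => simpa using hrt_nonneg
    | succ N ih =>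
      rw [Finset.sum_range_succ']
      simp only [catalan_zero, Nat.cast_one, one_mul, zero_add, pow_one]
      have h1 := conv_sq y hy0 N
      have h2 : (∑ n ∈ range N, (catalan n : ℝ) * y ^ (n+1)) ^ 2 ≤ rt ^ 2 := by
        apply pow_le_pow_left₀ (Finset.sum_nonneg fun n _ => hnonneg n) ih
      calc ∑ n ∈ range N, (catalan (n+1) : ℝ) * y ^ (n+1+1) + y
          ≤ rt ^ 2 + y := by
            refine add_le_add_left (le_trans ?_ (le_trans h1 h2)) y
            apply le_of_eq; rfl
        _ = rt := by linarith [hrt_eq]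
  have hsummable : Summable (fun n => (catalan n : ℝ) * y ^ (n+1)) :=
    summable_of_sum_range_le hnonneg hbound
  set L := ∑' n, (catalan n : ℝ) * y ^ (n+1) with hL_def
  have hL_le : L ≤ rt := Real.tsum_le_of_sum_range_le hnonneg hbound
  -- quadratic equation
  have hnorm : Summable (fun n => ‖(catalan n : ℝ) * y ^ (n+1)‖) := by
    simpa [Real.norm_of_nonneg (hnonneg _)] using hsummable
  have hsq : L * L = L - y := by
    rw [hL_def, tsum_mul_tsum_eq_tsum_sum_antidiagonal_of_summable_norm hnorm hnorm]
    have : ∀ n : ℕ, (∑ kl ∈ Finset.HasAntidiagonal.antidiagonal n,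
        ((catalan kl.1 : ℝ) * y ^ (kl.1+1)) * ((catalan kl.2 : ℝ) * y ^ (kl.2+1)))
        = (catalan (n+1) : ℝ) * y ^ (n+1+1) := by
      intro n
      rw [catalan_succ']
      push_cast
      rw [Finset.sum_mul]
      refine Finset.sum_congr rfl fun ij hij => ?_
      have : ij.1 + ij.2 = n := Finset.HasAntidiagonal.mem_antidiagonal.mp hij
      rw [← this]; ring
    simp_rw [this]
    have h0 := Summable.tsum_eq_zero_add hsummable
    simp only [catalan_zero, Nat.cast_one, one_mul, zero_add, pow_one] at h0
    rw [← hL_def] at h0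
    -- h0 : L = y + ∑' n, catalan (n+1) * y^(n+1+1)
    linarith [h0.symm]
  have hL_eq : L = rt := by nlinarith [hsq, hrt_eq, hL_le, hrt_lt, hs_pos]
  have := hsummable.hasSum
  rwa [← hL_def, hL_eq, hrt_def] at this

/-- `c n = centralBinom n / 4^n` as a product, matching `integral_sin_pow_even`. -/
noncomputable def c (n : ℕ) : ℝ := ∏ i ∈ range n, (2 * (i:ℝ) + 1) / (2 * i + 2)

lemma c_succ (n : ℕ) : c (n+1) = c n * ((2 * n + 1) / (2 * n + 2)) := prod_range_succ _ _

lemma c_pos (n : ℕ) : 0 < c n := by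
  apply Finset.prod_pos; intro i _; positivity

lemma c_le_one (n : ℕ) : c n ≤ 1 := by
  apply Finset.prod_le_one
  · intro i _; positivity
  · intro i _
    rw [div_le_one (by positivity)]
    linarith

/-- relation between `c` and the Wallis product. -/
lemma c_sq_W (n : ℕ) : c n ^ 2 * ((2 * n + 1) * Real.Wallis.W n) = 1 := by
  induction n with
  | zero => simp [c, Real.Wallis.W]
  | succ n ih =>
    rw [c_succ, Real.Wallis.W_succ]
    have h1 : (2 * (n:ℝ) + 1) ≠ 0 := by positivity
    have h2 : (2 * (n:ℝ) + 2) ≠ 0 := by positivity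
    have h3 : (2 * (n:ℝ) + 3) ≠ 0 := by positivity
    push_cast
    field_simp
    linear_combination (2*(n:ℝ)+3) * ih

lemma W_lt_pi_div_two (n : ℕ) : Real.Wallis.W n < π / 2 := by
  have h1 : Real.Wallis.W n < Real.Wallis.W (n+1) := by
    rw [Real.Wallis.W_succ]
    have hW := Real.Wallis.W_pos n
    have : (1:ℝ) < (2 * n + 2) / (2 * n + 1) * ((2 * n + 2) / (2 * n + 3)) := by
      rw [div_mul_div_comm, lt_div_iff₀ (by positivity)]
      ring_nf
      nlinarith [sq_nonneg ((n:ℝ))]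
    nlinarith
  exact lt_of_lt_of_le h1 (Real.Wallis.W_le (n+1))

/-- The sharp upper Wallis-type bound: `π * c n ^ 2 * (n + 1/4) < 1`. -/
lemma pi_c_sq_lt (n : ℕ) : π * c n ^ 2 * ((n:ℝ) + 1/4) < 1 := by
  set A : ℕ → ℝ := fun n => π * c n ^ 2 * ((n:ℝ) + 1/4) with hA_def
  have hA_eq : ∀ n, A n = π * (((n:ℝ) + 1/4) / (2 * n + 1)) * (Real.Wallis.W n)⁻¹ := by
    intro n
    have h1 : (2 * (n:ℝ) + 1) ≠ 0 := by positivity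
    have hW := Real.Wallis.W_pos n
    have hc := c_sq_W n
    rw [hA_def]
    field_simp
    linear_combination hc
  have hmono : StrictMono A := by
    apply strictMono_nat_of_lt_succ
    intro n
    have hc := c_pos n
    have key : A (n+1) - A n = π * c n ^ 2 / (4 * (2*(n:ℝ)+2)^2) := by
      rw [hA_def]
      simp only [c_succ]
      push_cast
      field_simp
      ring
    have hpos : (0:ℝ) < π * c n ^ 2 / (4 * (2*(n:ℝ)+2)^2) := by positivity
    linarith
  have htendsto : Tendsto A atTop (𝓝 1) := by
    have hrw : ∀ n : ℕ, A n = π * (1/2 - (1/4) * (2 * (n:ℝ) + 1)⁻¹) * (Real.Wallis.W n)⁻¹ := by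
      intro n
      rw [hA_eq n]
      congr 2
      have h1 : (2 * (n:ℝ) + 1) ≠ 0 := by positivity
      field_simp
      ring
    rw [show A = fun n : ℕ => π * (1/2 - (1/4) * (2 * (n:ℝ) + 1)⁻¹) * (Real.Wallis.W n)⁻¹ from funext hrw]
    have h0 : Tendsto (fun n : ℕ => (2 * (n:ℝ) + 1)⁻¹) atTop (𝓝 0) := by
      apply Filter.Tendsto.inv_tendsto_atTop
      apply Filter.tendsto_atTop_add_const_right
      exact Filter.Tendsto.const_mul_atTop two_pos tendsto_natCast_atTop_atTop
    have hW : Tendsto (fun n : ℕ => (Real.Wallis.W n)⁻¹) atTop (𝓝 (π/2)⁻¹) :=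
      (Real.Wallis.tendsto_W_nhds_pi_div_two).inv₀ (ne_of_gt pi_div_two_pos)
    have h := (((h0.const_mul (1/4:ℝ)).const_sub (1/2:ℝ)).const_mul π).mul hW
    have hval : π * (1/2 - 1/4 * 0) * (π/2)⁻¹ = 1 := by
      rw [mul_zero, sub_zero]
      field_simp
    rwa [hval] at h
  have hle : ∀ m, A m ≤ 1 := hmono.monotone.ge_of_tendsto htendsto
  calc A n < A (n+1) := hmono (Nat.lt_succ_self n)
    _ ≤ 1 := hle (n+1)

/-- The lower bound: `1 < π * c n ^ 2 * (n + 1/2)` for all n. -/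
lemma lt_pi_c_sq (n : ℕ) : 1 < π * c n ^ 2 * ((n:ℝ) + 1/2) := by
  have hc := c_sq_W n
  have hWlt := W_lt_pi_div_two n
  have h := mul_lt_mul_of_pos_left hWlt (mul_pos (pow_pos (c_pos n) 2) (by positivity : (0:ℝ) < 2*(n:ℝ)+1))
  nlinarith [h, hc]

lemma a_eq (n : ℕ) : (catalan n : ℝ) / (2 * 4 ^ n) = c (n+1) / (2 * n + 1) := by
  have hc_eq : ∀ m : ℕ, c m = (Nat.centralBinom m : ℝ) / 4 ^ m := by
    intro m
    induction m with
    | zero => simp [c, Nat.centralBinom]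
    | succ m ih =>
      have hcb : ((m:ℝ) + 1) * (Nat.centralBinom (m+1) : ℝ)
          = 2 * (2 * m + 1) * (Nat.centralBinom m : ℝ) := by
        exact_mod_cast congrArg (Nat.cast : ℕ → ℝ) (Nat.succ_mul_centralBinom_succ m)
      rw [c_succ, ih]
      have h4 : (4:ℝ) ^ (m+1) ≠ 0 := by positivity
      have hm1 : ((m:ℝ) + 1) ≠ 0 := by positivity
      have hm2 : (2*(m:ℝ) + 2) ≠ 0 := by positivity
      rw [pow_succ, div_mul_div_comm, div_eq_div_iff (by positivity) (by positivity)]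
      linear_combination (-2*(4:ℝ)^m) * hcb
  have hnat : (n+1) * Nat.centralBinom (n+1) = (n+1) * (2*(2*n+1)*catalan n) := by
    rw [Nat.succ_mul_centralBinom_succ, ← succ_mul_catalan_eq_centralBinom]
    ring
  have hCB1 : (Nat.centralBinom (n+1) : ℝ) = 2*(2*(n:ℝ)+1)*(catalan n : ℝ) := by
    exact_mod_cast congrArg (Nat.cast : ℕ → ℝ) (Nat.eq_of_mul_eq_mul_left (by omega) hnat)
  rw [hc_eq (n+1), div_div, pow_succ, div_eq_div_iff (by positivity) (by positivity), hCB1]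
  ring

lemma integral_sin_pow_halfpi (n : ℕ) :
    ∫ x in (0:ℝ)..(π/2), Real.sin x ^ (2*n) = π/2 * c n := by
  have hint : ∀ a b : ℝ, IntervalIntegrable (fun x => Real.sin x ^ (2*n)) volume a b :=
    fun a b => (Real.continuous_sin.pow _).intervalIntegrable a b
  have h1 : (∫ x in (0:ℝ)..π, Real.sin x ^ (2*n)) = π * c n := by
    rw [integral_sin_pow_even]; rfl
  have h2 : (∫ x in (π/2:ℝ)..π, Real.sin x ^ (2*n)) = ∫ x in (0:ℝ)..(π/2), Real.sin x ^ (2*n) := by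
    have h := intervalIntegral.integral_comp_sub_left (a := (0:ℝ)) (b := π/2)
      (fun x => Real.sin x ^ (2*n)) π
    simp only [Real.sin_pi_sub] at h
    rw [show π - π/2 = π/2 by ring, sub_zero] at h
    exact h.symm
  have h3 := intervalIntegral.integral_add_adjacent_intervals (a := (0:ℝ)) (b := π/2) (c := π)
    (hint 0 (π/2)) (hint (π/2) π)
  rw [h2] at h3
  linarith [h1, h3]

lemma sqrt_hasSum {x : ℝ} (hx0 : 0 ≤ x) (hx1 : x < 1) :
    HasSum (fun n => (catalan n : ℝ) / (2 * 4 ^ n) * x ^ (n+1)) (1 - Real.sqrt (1 - x)) := by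
  have h := catalan_hasSum (y := x/4) (by linarith) (by linarith)
  have h2 := h.mul_left 2
  have hfun : ∀ n : ℕ, 2 * ((catalan n : ℝ) * (x/4) ^ (n+1))
      = (catalan n : ℝ) / (2 * 4 ^ n) * x ^ (n+1) := by
    intro n
    rw [div_pow, pow_succ]
    have : (4:ℝ) ^ n ≠ 0 := by positivity
    field_simp
    ring
  have hval : 2 * ((1 - Real.sqrt (1 - 4*(x/4))) / 2) = 1 - Real.sqrt (1 - x) := by
    rw [show 1 - 4*(x/4) = 1 - x by ring]
    ring
  rw [← hval]
  exact (funext hfun) ▸ h2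

set_option maxHeartbeats 1600000 in
lemma hasSum_integral (t : ℝ) (ht0 : 0 < t) (ht1 : t < 1) :
    HasSum (fun n => (catalan n : ℝ) / (2 * 4 ^ n) * t ^ (2*(n+1)) * (π/2 * c (n+1)))
      (∫ θ in (0:ℝ)..(π/2), (1 - Real.sqrt (1 - t ^ 2 * Real.sin θ ^ 2))) := by
  have ht2 : t ^ 2 < 1 := by nlinarith
  have hF : HasSum
      (fun n => ∫ θ in (0:ℝ)..(π/2), (catalan n : ℝ) / (2 * 4 ^ n) * (t ^ 2 * Real.sin θ ^ 2) ^ (n+1))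
      (∫ θ in (0:ℝ)..(π/2), (1 - Real.sqrt (1 - t ^ 2 * Real.sin θ ^ 2))) := by
    apply intervalIntegral.hasSum_integral_of_dominated_convergence (μ := MeasureTheory.volume)
      (bound := fun n (_ : ℝ) => (t ^ 2) ^ (n+1))
    · intro n
      apply Continuous.aestronglyMeasurable
      fun_prop
    · intro n
      filter_upwards with θ _
      have hs : Real.sin θ ^ 2 ≤ 1 := Real.sin_sq_le_one θ
      have h1 : (0:ℝ) ≤ t ^ 2 * Real.sin θ ^ 2 := by positivity
      have hb : (t ^ 2 * Real.sin θ ^ 2) ^ (n+1) ≤ (t ^ 2) ^ (n+1) := by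
        apply pow_le_pow_left₀ h1
        nlinarith
      have ha2 : (catalan n : ℝ) / (2 * 4 ^ n) ≤ 1 := by
        rw [a_eq]
        have := c_le_one (n+1)
        have hpos : (0:ℝ) < 2 * n + 1 := by positivity
        rw [div_le_one hpos]
        have h1n : (1:ℝ) ≤ 2 * n + 1 := by norm_num
        linarith
      have ha0 : (0:ℝ) ≤ (catalan n : ℝ) / (2 * 4 ^ n) := by positivity
      rw [Real.norm_of_nonneg (by positivity)]
      calc (catalan n : ℝ) / (2 * 4 ^ n) * (t ^ 2 * Real.sin θ ^ 2) ^ (n+1)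
          ≤ 1 * (t ^ 2) ^ (n+1) := by
            apply mul_le_mul ha2 hb (by positivity) (by norm_num)
        _ = (t ^ 2) ^ (n+1) := one_mul _
    · filter_upwards with θ _
      show Summable (fun n : ℕ => (t ^ 2) ^ (n+1))
      simp_rw [pow_succ]
      exact (summable_geometric_of_lt_one (by positivity) ht2).mul_right _
    · exact intervalIntegrable_const
    · filter_upwards with θ _
      have hs : Real.sin θ ^ 2 ≤ 1 := Real.sin_sq_le_one θ
      have hx0 : (0:ℝ) ≤ t ^ 2 * Real.sin θ ^ 2 := by positivity
      have hx1 : t ^ 2 * Real.sin θ ^ 2 < 1 := by nlinarith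
      exact sqrt_hasSum hx0 hx1
  have hfun : (fun n => ∫ θ in (0:ℝ)..(π/2),
        (catalan n : ℝ) / (2 * 4 ^ n) * (t ^ 2 * Real.sin θ ^ 2) ^ (n+1))
      = fun n => (catalan n : ℝ) / (2 * 4 ^ n) * t ^ (2*(n+1)) * (π/2 * c (n+1)) := by
    funext n
    rw [show (fun θ => (catalan n : ℝ) / (2 * 4 ^ n) * (t ^ 2 * Real.sin θ ^ 2) ^ (n+1))
        = fun θ => ((catalan n : ℝ) / (2 * 4 ^ n) * t ^ (2*(n+1))) * Real.sin θ ^ (2*(n+1)) from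
      funext fun θ => by rw [mul_pow, ← pow_mul, ← pow_mul]; ring]
    rw [intervalIntegral.integral_const_mul, integral_sin_pow_halfpi]
  rw [hfun] at hF
  exact hF


end Stmt8Aux

open Stmt8Aux in
theorem stmt_8 (t : ℝ) (ht0 : 0 < t) (ht1 : t < 1) :
    π / 2 - 2 * (∑' i : ℕ, t ^ (2 * (i + 1)) / ((2 * (i + 1 : ℝ) - 1) * (4 * (i + 1 : ℝ) + 1)))
      < (∫ θ in (0:ℝ)..(π / 2), Real.sqrt (1 - t ^ 2 * Real.sin θ ^ 2)) ∧
    (∫ θ in (0:ℝ)..(π / 2), Real.sqrt (1 - t ^ 2 * Real.sin θ ^ 2))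
      < π / 2 - ∑' i : ℕ, t ^ (2 * (i + 1)) / ((2 * (i + 1 : ℝ) - 1) * (2 * (i + 1 : ℝ) + 1)) := by
  have ht2 : t ^ 2 < 1 := by nlinarith
  set I := ∫ θ in (0:ℝ)..(π / 2), Real.sqrt (1 - t ^ 2 * Real.sin θ ^ 2) with hI
  have h0 := hasSum_integral t ht0 ht1
  have hint : IntervalIntegrable (fun θ => Real.sqrt (1 - t ^ 2 * Real.sin θ ^ 2))
      MeasureTheory.volume 0 (π/2) := by
    apply Continuous.intervalIntegrable
    fun_prop
  have hsplit : (∫ θ in (0:ℝ)..(π/2), (1 - Real.sqrt (1 - t ^ 2 * Real.sin θ ^ 2)))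
      = π/2 - I := by
    rw [intervalIntegral.integral_sub intervalIntegrable_const hint,
      intervalIntegral.integral_const]
    simp [hI]
  rw [hsplit] at h0
  have h : HasSum (fun n => c (n+1) / (2 * (n:ℝ) + 1) * t ^ (2*(n+1)) * (π/2 * c (n+1)))
      (π/2 - I) := by
    simpa only [a_eq] using h0
  have hGpos : ∀ b : ℕ, 0 < c (b+1) / (2 * (b:ℝ) + 1) * t ^ (2*(b+1)) * (π/2 * c (b+1)) :=
    fun b => mul_pos (mul_pos (div_pos (c_pos (b+1)) (by positivity)) (pow_pos ht0 _))
      (mul_pos (by positivity) (c_pos (b+1)))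
  have hgeo : Summable (fun b : ℕ => (t^2)^(b+1)) := by
    simp_rw [pow_succ]
    exact (summable_geometric_of_lt_one (by positivity) ht2).mul_right _
  have hrw1 : ∀ i : ℕ, 2 * ((i:ℝ) + 1) - 1 = 2 * (i:ℝ) + 1 := fun i => by ring
  have hrw2 : ∀ i : ℕ, 4 * ((i:ℝ) + 1) + 1 = 4 * (i:ℝ) + 5 := fun i => by ring
  have hrw3 : ∀ i : ℕ, 2 * ((i:ℝ) + 1) + 1 = 2 * (i:ℝ) + 3 := fun i => by ring
  simp_rw [hrw1, hrw2, hrw3]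
  constructor
  · -- lower bound
    have hkey : ∀ b : ℕ, c (b+1) / (2 * (b:ℝ) + 1) * t ^ (2*(b+1)) * (π/2 * c (b+1))
        < 2 * (t ^ (2*(b+1)) / ((2 * (b:ℝ) + 1) * (4 * (b:ℝ) + 5))) := by
      intro b
      have hk := pi_c_sq_lt (b+1)
      push_cast at hk
      have key : π * c (b+1) ^ 2 * (4*(b:ℝ)+5) < 4 := by nlinarith
      have hp : (0:ℝ) < t ^ (2*(b+1)) := pow_pos ht0 _
      have hD1 : (0:ℝ) < 2 * (b:ℝ) + 1 := by positivity
      have hD2 : (0:ℝ) < 4 * (b:ℝ) + 5 := by positivity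
      rw [div_mul_eq_mul_div, div_mul_eq_mul_div, mul_div_assoc' 2 _ _,
        div_lt_div_iff₀ (by positivity) (by positivity)]
      nlinarith [key, mul_pos hp hD1, mul_pos (mul_pos hp hD1) hD2, c_pos (b+1)]
    have hsum2 : Summable (fun b : ℕ =>
        2 * (t ^ (2*(b+1)) / ((2 * (b:ℝ) + 1) * (4 * (b:ℝ) + 5)))) := by
      apply Summable.of_nonneg_of_le (fun b => by positivity) _ (hgeo.mul_left 2)
      intro b
      rw [pow_mul]
      have hD : (1:ℝ) ≤ (2 * (b:ℝ) + 1) * (4 * (b:ℝ) + 5) := by nlinarith [Nat.cast_nonneg (α := ℝ) b]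
      have : (t^2) ^ (b+1) / ((2 * (b:ℝ) + 1) * (4 * (b:ℝ) + 5)) ≤ (t^2) ^ (b+1) :=
        div_le_self (by positivity) hD
      linarith
    have hlt : π/2 - I < 2 * ∑' i : ℕ, t ^ (2*(i+1)) / ((2 * (i:ℝ) + 1) * (4 * (i:ℝ) + 5)) := by
      rw [← h.tsum_eq, ← tsum_mul_left]
      exact Summable.tsum_lt_tsum_of_nonneg (fun b => (hGpos b).le) (fun b => (hkey b).le) (hkey 0) hsum2
    linarith
  · -- upper bound
    have hkey : ∀ b : ℕ, t ^ (2*(b+1)) / ((2 * (b:ℝ) + 1) * (2 * (b:ℝ) + 3))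
        < c (b+1) / (2 * (b:ℝ) + 1) * t ^ (2*(b+1)) * (π/2 * c (b+1)) := by
      intro b
      have hk := lt_pi_c_sq (b+1)
      push_cast at hk
      have key : 2 < π * c (b+1) ^ 2 * (2*(b:ℝ)+3) := by nlinarith
      have hp : (0:ℝ) < t ^ (2*(b+1)) := pow_pos ht0 _
      have hD1 : (0:ℝ) < 2 * (b:ℝ) + 1 := by positivity
      have hD3 : (0:ℝ) < 2 * (b:ℝ) + 3 := by positivity
      rw [div_mul_eq_mul_div, div_mul_eq_mul_div,
        div_lt_div_iff₀ (by positivity) (by positivity)]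
      nlinarith [key, mul_pos hp hD1, mul_pos (mul_pos hp hD1) hD3, c_pos (b+1)]
    have hlt : (∑' i : ℕ, t ^ (2*(i+1)) / ((2 * (i:ℝ) + 1) * (2 * (i:ℝ) + 3))) < π/2 - I := by
      rw [← h.tsum_eq]
      exact Summable.tsum_lt_tsum_of_nonneg (fun b => by positivity) (fun b => (hkey b).le) (hkey 0)
        h.summable
    linarith
end

section
/- For all real t with 0 < t < 1, one has ∑_{i=1}^∞ t^{2i}/((2i−1)(4i+1)) < (1/4)·ln((1+t)^{1−t}/(1−t)^{1+t}). -/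
open Real

theorem stmt_10 (t : ℝ) (ht0 : 0 < t) (ht1 : t < 1) :
    (∑' i : ℕ, t ^ (2 * (i + 1)) / ((2 * (i + 1 : ℝ) - 1) * (4 * (i + 1 : ℝ) + 1)))
      < (1 / 4) * Real.log ((1 + t) ^ (1 - t) / (1 - t) ^ (1 + t)) := by
  have habs : |t| < 1 := by rw [abs_of_pos ht0]; exact ht1
  have h1t : (0:ℝ) < 1 - t := by linarith
  have h1t' : (0:ℝ) < 1 + t := by linarith
  set Lp := Real.log (1 + t) with hLp
  set Lm := Real.log (1 - t) with hLm
  -- series 1 : ∑ t^(2k+2)/(2k+1) = (t/2)(Lp - Lm)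
  have S1 : HasSum (fun k : ℕ => t ^ (2 * k + 2) / (2 * (k:ℝ) + 1))
      (t / 2 * (Lp - Lm)) := by
    have h := (Real.hasSum_log_sub_log_of_abs_lt_one habs).mul_left (t / 2)
    have he : (fun k : ℕ => t / 2 * (2 * (1 / (2 * (k:ℝ) + 1)) * t ^ (2 * k + 1)))
        = fun k : ℕ => t ^ (2 * k + 2) / (2 * (k:ℝ) + 1) := by
      funext k
      have hk : (2 * (k:ℝ) + 1) ≠ 0 := by positivity
      rw [show 2 * k + 2 = (2 * k + 1) + 1 by ring, pow_succ]
      field_simp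
      ring
    rw [← he]
    exact h
  -- series 2 : ∑ t^(2k+2)/(2k+2) = -(1/2) log (1 - t^2)
  have habs2 : |t ^ 2| < 1 := by
    rw [abs_of_nonneg (sq_nonneg t)]
    nlinarith
  have S2 : HasSum (fun k : ℕ => t ^ (2 * k + 2) / (2 * (k:ℝ) + 2))
      (-(1/2) * Real.log (1 - t ^ 2)) := by
    have h := (Real.hasSum_pow_div_log_of_abs_lt_one habs2).mul_left (1/2)
    have he : ∀ k : ℕ, (1:ℝ)/2 * ((t ^ 2) ^ (k + 1) / ((k:ℝ) + 1))
        = t ^ (2 * k + 2) / (2 * (k:ℝ) + 2) := by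
      intro k
      have hk : ((k:ℝ) + 1) ≠ 0 := by positivity
      rw [← pow_mul]
      rw [show 2 * (k + 1) = 2 * k + 2 from rfl]
      field_simp
    have hv : -(1/2 : ℝ) * Real.log (1 - t ^ 2) = 1/2 * -Real.log (1 - t ^ 2) := by ring
    rw [← funext he, hv]
    exact h
  have Sg : HasSum (fun k : ℕ => (1/2) * (t ^ (2 * k + 2) / (2 * (k:ℝ) + 1)
        - t ^ (2 * k + 2) / (2 * (k:ℝ) + 2)))
      ((1/2) * (t / 2 * (Lp - Lm) - (-(1/2) * Real.log (1 - t ^ 2)))) :=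
    (S1.sub S2).mul_left (1/2)
  set B := (1/2) * (t / 2 * (Lp - Lm) - (-(1/2) * Real.log (1 - t ^ 2))) with hB
  set f : ℕ → ℝ := fun i => t ^ (2 * (i + 1)) / ((2 * (i + 1 : ℝ) - 1) * (4 * (i + 1 : ℝ) + 1)) with hf
  set g : ℕ → ℝ := fun k => (1/2) * (t ^ (2 * k + 2) / (2 * (k:ℝ) + 1)
        - t ^ (2 * k + 2) / (2 * (k:ℝ) + 2)) with hg
  have hfg : ∀ k, f k < g k := by
    intro k
    have hk1 : (0:ℝ) < 2 * (k:ℝ) + 1 := by positivity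
    have hk2 : (0:ℝ) < 2 * (k:ℝ) + 2 := by positivity
    have hpow : (0:ℝ) < t ^ (2 * k + 2) := by positivity
    have hid : (2 : ℝ) * (k + 1) = 2 * k + 2 := by ring
    simp only [hf, hg]
    rw [show 2 * (k + 1) = 2 * k + 2 by ring]
    rw [div_sub_div _ _ hk1.ne' hk2.ne', ← mul_div_assoc, div_lt_div_iff₀ (by nlinarith) (by positivity)]
    push_cast
    nlinarith [hpow]
  have hfnn : ∀ k, 0 ≤ f k := by
    intro k
    have : (0:ℝ) < (2 * ((k:ℝ) + 1) - 1) * (4 * ((k:ℝ) + 1) + 1) := by nlinarith [Nat.cast_nonneg (α := ℝ) k]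
    positivity
  have hSf : Summable f :=
    Summable.of_nonneg_of_le hfnn (fun k => (hfg k).le) Sg.summable
  have hlt : (∑' i, f i) < B := by
    calc (∑' i, f i) < ∑' i, g i :=
          Summable.tsum_lt_tsum (fun k => (hfg k).le) (hfg 0) hSf Sg.summable
      _ = B := Sg.tsum_eq
  refine hlt.trans_le ?_
  -- now show B ≤ RHS
  have hlog : Real.log ((1 + t) ^ (1 - t) / (1 - t) ^ (1 + t))
      = (1 - t) * Lp - (1 + t) * Lm := by
    rw [Real.log_div (by positivity) (by positivity), Real.log_rpow h1t', Real.log_rpow h1t]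
  have hsq : Real.log (1 - t ^ 2) = Lp + Lm := by
    rw [show (1:ℝ) - t ^ 2 = (1 + t) * (1 - t) by ring, Real.log_mul h1t'.ne' h1t.ne']
  rw [hlog, hB, hsq]
  have hub : Lp ≤ t := by
    have := Real.log_le_sub_one_of_pos h1t'
    linarith
  have hlb : Lm ≤ -t := by
    have := Real.log_le_sub_one_of_pos h1t
    linarith
  have ht2 : t ^ 2 ≤ t := by nlinarith
  have hLpnn : 0 ≤ Lp := Real.log_nonneg (by linarith)
  -- need: (1/2)(t/2(Lp-Lm) + (1/2)(Lp+Lm)) ≤ (1/4)((1-t)Lp - (1+t)Lm)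
  -- ⇔ t Lp + Lm ≤ 0, from t Lp ≤ t² ≤ t ≤ -Lm
  nlinarith [mul_le_mul_of_nonneg_left hub ht0.le]
end

section
/- For every real t > 0, one has (π/2)·ln((1+t²)^{1/4} + √(√(1+t²) − 1))/√(1 + t² − √(1+t²)) ≤ ∫₀^{π/2} dθ/√(1 + t² cos²θ) ≤ (π/2)·arctan(√(√(1+t²) − 1))/√(√(1+t²) − 1). -/
open Real Set MeasureTheory intervalIntegral Filter

section AuxLemmas

lemma pointwise_subst {s : ℝ} (hs : 1 < s) {φ : ℝ} (hc : 0 < Real.cos φ) :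
    (1 / (1 + (Real.sqrt s * Real.tan φ) ^ 2) * (Real.sqrt s * (1 / Real.cos φ ^ 2))) *
      (1 / Real.sqrt (s ^ 2 * Real.cos (Real.arctan (Real.sqrt s * Real.tan φ)) ^ 2
        + Real.sin (Real.arctan (Real.sqrt s * Real.tan φ)) ^ 2))
    = 1 / Real.sqrt (s + ((s - 1) / 2) ^ 2 * Real.sin (2 * φ) ^ 2) := by
  have hs0 : (0:ℝ) < s := by linarith
  have hrs : (0:ℝ) < Real.sqrt s := Real.sqrt_pos.2 hs0
  set w : ℝ := Real.sqrt s * Real.tan φ with hw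
  have h1w : (0:ℝ) < 1 + w ^ 2 := by positivity
  have hsq : Real.sqrt (1 + w ^ 2) ^ 2 = 1 + w ^ 2 := Real.sq_sqrt h1w.le
  have hrad : s ^ 2 * Real.cos (Real.arctan w) ^ 2 + Real.sin (Real.arctan w) ^ 2
      = (s ^ 2 + w ^ 2) / (1 + w ^ 2) := by
    rw [Real.cos_arctan, Real.sin_arctan, div_pow, div_pow, hsq]
    ring
  rw [hrad, Real.sqrt_div (by positivity) (1 + w ^ 2)]
  have hw2 : w ^ 2 = s * Real.sin φ ^ 2 / Real.cos φ ^ 2 := by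
    rw [hw, mul_pow, Real.sq_sqrt hs0.le, Real.tan_eq_sin_div_cos, div_pow]
    ring
  have hA : (0:ℝ) < s + ((s - 1) / 2) ^ 2 * Real.sin (2 * φ) ^ 2 := by positivity
  have hsw : (0:ℝ) < s ^ 2 + w ^ 2 := by positivity
  have key : (s + ((s - 1) / 2) ^ 2 * Real.sin (2 * φ) ^ 2) * (s * (1 + w ^ 2))
      = ((1 + w ^ 2) * Real.cos φ ^ 2) ^ 2 * (s ^ 2 + w ^ 2) := by
    have h2phi : Real.sin (2 * φ) ^ 2 = 4 * (1 - Real.cos φ ^ 2) * Real.cos φ ^ 2 := by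
      rw [Real.sin_two_mul]
      have := Real.sin_sq_add_cos_sq φ
      nlinarith [this]
    rw [h2phi, hw2, Real.sin_sq φ]
    field_simp
    ring
  have e1 : Real.sqrt (s + ((s - 1) / 2) ^ 2 * Real.sin (2 * φ) ^ 2)
        * (Real.sqrt s * Real.sqrt (1 + w ^ 2))
      = (1 + w ^ 2) * Real.cos φ ^ 2 * Real.sqrt (s ^ 2 + w ^ 2) := by
    rw [← Real.sqrt_mul hs0.le, ← Real.sqrt_mul hA.le]
    rw [key, Real.sqrt_mul (by positivity), Real.sqrt_sq (by positivity)]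
  rw [one_div_div]
  have lhs_eq : 1 / (1 + w ^ 2) * (Real.sqrt s * (1 / Real.cos φ ^ 2))
        * (Real.sqrt (1 + w ^ 2) / Real.sqrt (s ^ 2 + w ^ 2))
      = (Real.sqrt s * Real.sqrt (1 + w ^ 2))
        / ((1 + w ^ 2) * Real.cos φ ^ 2 * Real.sqrt (s ^ 2 + w ^ 2)) := by
    have hcs : Real.cos φ ≠ 0 := hc.ne'
    have hsw' : Real.sqrt (s ^ 2 + w ^ 2) ≠ 0 := (Real.sqrt_pos.2 hsw).ne'
    field_simp
  rw [lhs_eq, div_eq_div_iff (by positivity) (Real.sqrt_pos.2 hA).ne']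
  linear_combination e1

section


variable {s : ℝ}

lemma cont_g (hs : 1 < s) :
    Continuous fun θ : ℝ => 1 / Real.sqrt (s ^ 2 * Real.cos θ ^ 2 + Real.sin θ ^ 2) := by
  apply Continuous.div continuous_const
  · exact Real.continuous_sqrt.comp (by continuity)
  · intro θ
    have h0 : (0:ℝ) ≤ (s ^ 2 - 1) * Real.cos θ ^ 2 :=
      mul_nonneg (by nlinarith) (sq_nonneg _)
    have h1 : (1:ℝ) ≤ s ^ 2 * Real.cos θ ^ 2 + Real.sin θ ^ 2 := by
      nlinarith [Real.sin_sq_add_cos_sq θ]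
    exact (Real.sqrt_pos.2 (by linarith)).ne'

lemma cont_h (hs : 1 < s) :
    Continuous fun ψ : ℝ => 1 / Real.sqrt (s + ((s - 1) / 2) ^ 2 * Real.sin ψ ^ 2) := by
  apply Continuous.div continuous_const
  · exact Real.continuous_sqrt.comp (by continuity)
  · intro ψ
    have h1 : (0:ℝ) < s + ((s - 1) / 2) ^ 2 * Real.sin ψ ^ 2 := by positivity
    exact (Real.sqrt_pos.2 h1).ne'

lemma landen (hs : 1 < s) :
    (∫ θ in (0:ℝ)..(π/2), 1 / Real.sqrt (s ^ 2 * Real.cos θ ^ 2 + Real.sin θ ^ 2))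
      = ∫ ψ in (0:ℝ)..(π/2), 1 / Real.sqrt (s + ((s - 1) / 2) ^ 2 * Real.sin ψ ^ 2) := by
  have hs0 : (0:ℝ) < s := by linarith
  have hrs : (0:ℝ) < Real.sqrt s := Real.sqrt_pos.2 hs0
  set g : ℝ → ℝ := fun θ => 1 / Real.sqrt (s ^ 2 * Real.cos θ ^ 2 + Real.sin θ ^ 2) with hgdef
  set h2 : ℝ → ℝ := fun φ => 1 / Real.sqrt (s + ((s - 1) / 2) ^ 2 * Real.sin (2 * φ) ^ 2)
    with hh2def
  have hgc : Continuous g := cont_g hs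
  have hh2c : Continuous h2 := (cont_h hs).comp (continuous_const.mul continuous_id)
  -- Step A: substitution on [0, c] for c < π/2
  have stepA : ∀ c : ℝ, 0 ≤ c → c < π / 2 →
      (∫ φ in (0:ℝ)..c, h2 φ)
        = ∫ θ in (0:ℝ)..(Real.arctan (Real.sqrt s * Real.tan c)), g θ := by
    intro c hc0 hc2
    have hcos : ∀ x ∈ uIcc (0:ℝ) c, 0 < Real.cos x := by
      intro x hx
      rw [uIcc_of_le hc0] at hx
      apply Real.cos_pos_of_mem_Ioo
      constructor
      · linarith [hx.1, Real.pi_pos]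
      · linarith [hx.2]
    set f : ℝ → ℝ := fun φ => Real.arctan (Real.sqrt s * Real.tan φ) with hfdef
    set f' : ℝ → ℝ := fun φ =>
      1 / (1 + (Real.sqrt s * Real.tan φ) ^ 2) * (Real.sqrt s * (1 / Real.cos φ ^ 2)) with hf'def
    have hderiv : ∀ x ∈ uIcc (0:ℝ) c, HasDerivAt f (f' x) x := by
      intro x hx
      have h1 : HasDerivAt (fun y => Real.sqrt s * Real.tan y)
          (Real.sqrt s * (1 / Real.cos x ^ 2)) x :=
        (Real.hasDerivAt_tan (hcos x hx).ne').const_mul _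
      exact (Real.hasDerivAt_arctan _).comp x h1
    have hcont' : ContinuousOn f' (uIcc (0:ℝ) c) := by
      intro x hx
      apply ContinuousAt.continuousWithinAt
      have htan : ContinuousAt Real.tan x := Real.continuousAt_tan.2 (hcos x hx).ne'
      have h1 : ContinuousAt (fun y => 1 + (Real.sqrt s * Real.tan y) ^ 2) x := by
        exact (continuousAt_const.add (((continuousAt_const.mul htan)).pow 2))
      have h2' : ContinuousAt (fun y => Real.cos y ^ 2) x := (Real.continuous_cos.continuousAt).pow 2
      apply ContinuousAt.mul
      · exact continuousAt_const.div h1 (by positivity)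
      · exact continuousAt_const.mul (continuousAt_const.div h2' (pow_pos (hcos x hx) 2).ne')
    have hsub := integral_comp_smul_deriv hderiv hcont' hgc
    simp only [Function.comp] at hsub
    have hcongr : (∫ φ in (0:ℝ)..c, h2 φ) = ∫ φ in (0:ℝ)..c, f' φ • g (f φ) := by
      apply integral_congr
      intro x hx
      have := pointwise_subst hs (hcos x hx)
      simp only [hh2def, hf'def, hfdef, hgdef, smul_eq_mul]
      exact this.symm
    rw [hcongr, hsub]
    simp [hfdef, Real.tan_zero, Real.arctan_zero]
  -- Step B: take limits c → π/2⁻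
  set h : ℝ → ℝ := fun ψ => 1 / Real.sqrt (s + ((s - 1) / 2) ^ 2 * Real.sin ψ ^ 2) with hhdef
  have hhc : Continuous h := cont_h hs
  have hInt_h2 : ∀ a b : ℝ, IntervalIntegrable h2 volume a b :=
    fun a b => hh2c.intervalIntegrable a b
  have hInt_g : ∀ a b : ℝ, IntervalIntegrable g volume a b :=
    fun a b => hgc.intervalIntegrable a b
  have hInt_h : ∀ a b : ℝ, IntervalIntegrable h volume a b :=
    fun a b => hhc.intervalIntegrable a b
  have contH : Continuous fun c => ∫ φ in (0:ℝ)..c, h2 φ :=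
    intervalIntegral.continuous_primitive hInt_h2 0
  have contG : Continuous fun d => ∫ θ in (0:ℝ)..d, g θ :=
    intervalIntegral.continuous_primitive hInt_g 0
  have tendtheta : Tendsto (fun c => Real.arctan (Real.sqrt s * Real.tan c))
      (nhdsWithin (π/2) (Iio (π/2))) (nhds (π/2)) := by
    have h1 : Tendsto (fun c => Real.sqrt s * Real.tan c) (nhdsWithin (π/2) (Iio (π/2))) atTop :=
      Real.tendsto_tan_pi_div_two.const_mul_atTop hrs
    exact (tendsto_nhds_of_tendsto_nhdsWithin Real.tendsto_arctan_atTop).comp h1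
  have tend1 : Tendsto (fun c => ∫ φ in (0:ℝ)..c, h2 φ) (nhdsWithin (π/2) (Iio (π/2)))
      (nhds (∫ φ in (0:ℝ)..(π/2), h2 φ)) :=
    (contH.tendsto _).mono_left nhdsWithin_le_nhds
  have tend2 : Tendsto (fun c => ∫ θ in (0:ℝ)..(Real.arctan (Real.sqrt s * Real.tan c)), g θ)
      (nhdsWithin (π/2) (Iio (π/2))) (nhds (∫ θ in (0:ℝ)..(π/2), g θ)) :=
    (contG.tendsto _).comp tendtheta
  have evEq : (fun c => ∫ φ in (0:ℝ)..c, h2 φ) =ᶠ[nhdsWithin (π/2) (Iio (π/2))]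
      (fun c => ∫ θ in (0:ℝ)..(Real.arctan (Real.sqrt s * Real.tan c)), g θ) := by
    filter_upwards [Ioo_mem_nhdsLT_of_mem (Set.mem_Ioc.2 ⟨Real.pi_div_two_pos, le_refl _⟩)]
      with c hc
    exact stepA c hc.1.le hc.2
  have hB : (∫ φ in (0:ℝ)..(π/2), h2 φ) = ∫ θ in (0:ℝ)..(π/2), g θ :=
    tendsto_nhds_unique (tend1.congr' evEq) tend2
  -- Step C: angle doubling
  have c1 : (∫ φ in (0:ℝ)..(π/2), h2 φ) = (2:ℝ)⁻¹ • ∫ x in (0:ℝ)..π, h x := by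
    have e0 : (∫ φ in (0:ℝ)..(π/2), h2 φ) = ∫ φ in (0:ℝ)..(π/2), h (2 * φ) := rfl
    rw [e0, intervalIntegral.integral_comp_mul_left h two_ne_zero]
    norm_num
    rw [show (2:ℝ) * (π/2) = π by ring]
  have c3 : (∫ x in (π/2:ℝ)..π, h x) = ∫ x in (0:ℝ)..(π/2), h x := by
    have e1 : (∫ x in (0:ℝ)..(π/2), h (x + π/2)) = ∫ x in (π/2:ℝ)..π, h x := by
      have := intervalIntegral.integral_comp_add_right (a := (0:ℝ)) (b := π/2) (f := h) (π/2)
      simpa [show π/2 + π/2 = π by ring] using this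
    have e3 : (∫ x in (0:ℝ)..(π/2), h (π/2 - x)) = ∫ x in (0:ℝ)..(π/2), h x := by
      have := intervalIntegral.integral_comp_sub_left (a := (0:ℝ)) (b := π/2) h (π/2)
      simpa using this
    rw [← e1]
    calc (∫ x in (0:ℝ)..(π/2), h (x + π/2))
        = ∫ x in (0:ℝ)..(π/2), h (π/2 - x) := by
          apply integral_congr
          intro x _
          simp only [hhdef]
          rw [Real.sin_add_pi_div_two, Real.sin_pi_div_two_sub]
      _ = ∫ x in (0:ℝ)..(π/2), h x := e3
  have c2 : (∫ x in (0:ℝ)..π, h x) = (∫ x in (0:ℝ)..(π/2), h x) + ∫ x in (π/2:ℝ)..π, h x :=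
    (integral_add_adjacent_intervals (hInt_h 0 (π/2)) (hInt_h (π/2) π)).symm
  rw [← hB, c1, c2, c3, smul_eq_mul]
  ring

end

lemma ftc_arctan {u : ℝ} (hu : 0 < u) :
    (∫ θ in (0:ℝ)..(π/2), 1 / (1 + u ^ 2 * (1 - 2 * θ / π) ^ 2))
      = (π / (2 * u)) * Real.arctan u := by
  have hpi := Real.pi_pos
  set F : ℝ → ℝ := fun θ => (π / (2 * u)) * Real.arctan (u * (2 * θ / π - 1)) with hF
  have hderiv : ∀ x ∈ uIcc (0:ℝ) (π/2),
      HasDerivAt F (1 / (1 + u ^ 2 * (1 - 2 * x / π) ^ 2)) x := by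
    intro x _
    have h1 : HasDerivAt (fun y : ℝ => u * (2 * y / π - 1)) (u * (2 / π)) x := by
      have := (((hasDerivAt_id x).const_mul (2:ℝ)).div_const π).sub_const 1
      have h2 := this.const_mul u
      simpa [mul_comm, mul_assoc, mul_one] using h2
    have h2 := (Real.hasDerivAt_arctan (u * (2 * x / π - 1))).comp x h1
    have h3 := h2.const_mul (π / (2 * u))
    refine h3.congr_deriv ?_
    field_simp
    ring
  have hI : IntervalIntegrable (fun θ : ℝ => 1 / (1 + u ^ 2 * (1 - 2 * θ / π) ^ 2))
      volume 0 (π/2) := by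
    apply Continuous.intervalIntegrable
    apply Continuous.div continuous_const (by continuity)
    intro x
    positivity
  rw [intervalIntegral.integral_eq_sub_of_hasDerivAt hderiv hI]
  have e1 : (2 * (π/2) / π - 1 : ℝ) = 0 := by field_simp; ring
  have e2 : (2 * (0:ℝ) / π - 1 : ℝ) = -1 := by field_simp; ring
  simp only [hF, e1, e2]
  rw [mul_zero, Real.arctan_zero, mul_neg_one, Real.arctan_neg]
  ring

lemma ftc_arsinh {u : ℝ} (hu : 0 < u) :
    (∫ ψ in (0:ℝ)..(π/2), 1 / Real.sqrt (1 + (2 * u * ψ / π) ^ 2))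
      = (π / (2 * u)) * Real.arsinh u := by
  have hpi := Real.pi_pos
  set F : ℝ → ℝ := fun ψ => (π / (2 * u)) * Real.arsinh (2 * u * ψ / π) with hF
  have hderiv : ∀ x ∈ uIcc (0:ℝ) (π/2),
      HasDerivAt F (1 / Real.sqrt (1 + (2 * u * x / π) ^ 2)) x := by
    intro x _
    have h1 : HasDerivAt (fun y : ℝ => 2 * u * y / π) (2 * u / π) x := by
      have := ((hasDerivAt_id x).const_mul (2 * u)).div_const π
      simpa [mul_comm, mul_assoc, mul_one] using this
    have h2 := (Real.hasDerivAt_arsinh (2 * u * x / π)).comp x h1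
    have h3 := h2.const_mul (π / (2 * u))
    refine h3.congr_deriv ?_
    have hsq : Real.sqrt (1 + (2 * u * x / π) ^ 2) ≠ 0 :=
      (Real.sqrt_pos.2 (by positivity)).ne'
    field_simp
  have hI : IntervalIntegrable (fun ψ : ℝ => 1 / Real.sqrt (1 + (2 * u * ψ / π) ^ 2))
      volume 0 (π/2) := by
    apply Continuous.intervalIntegrable
    apply Continuous.div continuous_const
    · exact Real.continuous_sqrt.comp (by continuity)
    · intro x
      exact (Real.sqrt_pos.2 (by positivity)).ne'
  rw [intervalIntegral.integral_eq_sub_of_hasDerivAt hderiv hI]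
  have e1 : (2 * u * (π/2) / π : ℝ) = u := by field_simp
  have e2 : (2 * u * (0:ℝ) / π : ℝ) = 0 := by simp
  simp only [hF, e1, e2, Real.arsinh_zero, mul_zero, sub_zero]
  norm_num

set_option maxHeartbeats 2000000 in
theorem stmt_11 (t : ℝ) (ht : 0 < t) :
    (π / 2) * Real.log ((1 + t ^ 2) ^ ((1:ℝ) / 4) + Real.sqrt (Real.sqrt (1 + t ^ 2) - 1))
        / Real.sqrt (1 + t ^ 2 - Real.sqrt (1 + t ^ 2))
      ≤ (∫ θ in (0:ℝ)..(π / 2), 1 / Real.sqrt (1 + t ^ 2 * Real.cos θ ^ 2)) ∧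
    (∫ θ in (0:ℝ)..(π / 2), 1 / Real.sqrt (1 + t ^ 2 * Real.cos θ ^ 2))
      ≤ (π / 2) * Real.arctan (Real.sqrt (Real.sqrt (1 + t ^ 2) - 1))
          / Real.sqrt (Real.sqrt (1 + t ^ 2) - 1) := by
  have hpi := Real.pi_pos
  have h1t : (0:ℝ) < 1 + t ^ 2 := by positivity
  set s := Real.sqrt (1 + t ^ 2) with hsdef
  have hss : s ^ 2 = 1 + t ^ 2 := Real.sq_sqrt h1t.le
  have hs1 : 1 < s := by
    calc (1:ℝ) = Real.sqrt 1 := by rw [Real.sqrt_one]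
      _ < s := Real.sqrt_lt_sqrt zero_le_one (by nlinarith)
  have hs0 : (0:ℝ) < s := by linarith
  set u := Real.sqrt (s - 1) with hudef
  have hu2 : u ^ 2 = s - 1 := Real.sq_sqrt (by linarith)
  have hu0 : 0 < u := Real.sqrt_pos.2 (by linarith)
  have hrs : (0:ℝ) < Real.sqrt s := Real.sqrt_pos.2 hs0
  have hIg : (∫ θ in (0:ℝ)..(π / 2), 1 / Real.sqrt (1 + t ^ 2 * Real.cos θ ^ 2))
      = ∫ θ in (0:ℝ)..(π/2), 1 / Real.sqrt (s ^ 2 * Real.cos θ ^ 2 + Real.sin θ ^ 2) := by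
    apply integral_congr
    intro x _
    have hx : 1 + t ^ 2 * Real.cos x ^ 2 = s ^ 2 * Real.cos x ^ 2 + Real.sin x ^ 2 := by
      rw [hss, Real.sin_sq]; ring
    simp only [hx]
  have hcont_orig : Continuous (fun θ : ℝ => 1 / Real.sqrt (1 + t ^ 2 * Real.cos θ ^ 2)) := by
    apply Continuous.div continuous_const (Real.continuous_sqrt.comp (by continuity))
    intro x
    exact (Real.sqrt_pos.2 (by positivity)).ne'
  constructor
  · -- LOWER BOUND
    have e1 : ((1 + t ^ 2):ℝ) ^ ((1:ℝ)/4) = Real.sqrt s := by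
      rw [hsdef, show ((1:ℝ)/4) = (1/2 : ℝ) * (1/2 : ℝ) by norm_num,
        Real.rpow_mul h1t.le, ← Real.sqrt_eq_rpow, ← Real.sqrt_eq_rpow]
    have e2 : Real.sqrt (1 + t ^ 2 - s) = Real.sqrt s * u := by
      rw [hudef, ← Real.sqrt_mul hs0.le]
      congr 1
      rw [← hss]; ring
    have e3 : Real.log (Real.sqrt s + u) = Real.arsinh u := by
      have h' : Real.sqrt (1 + u ^ 2) = Real.sqrt s := by
        rw [hu2]; congr 1; ring
      rw [Real.arsinh, h', add_comm]
    rw [e1, e2, e3, hIg, landen hs1]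
    have hminor_cont : Continuous
        (fun ψ : ℝ => (Real.sqrt s)⁻¹ * (1 / Real.sqrt (1 + (2 * u * ψ / π) ^ 2))) := by
      apply Continuous.mul continuous_const
      apply Continuous.div continuous_const (Real.continuous_sqrt.comp (by continuity))
      intro x
      exact (Real.sqrt_pos.2 (by positivity)).ne'
    have ptwise : ∀ ψ ∈ Icc (0:ℝ) (π/2),
        (Real.sqrt s)⁻¹ * (1 / Real.sqrt (1 + (2 * u * ψ / π) ^ 2))
          ≤ 1 / Real.sqrt (s + ((s - 1) / 2) ^ 2 * Real.sin ψ ^ 2) := by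
      intro ψ hψ
      have hψ0 : 0 ≤ ψ := hψ.1
      have hsin_le : Real.sin ψ ≤ ψ := Real.sin_le hψ0
      have hsin0 : 0 ≤ Real.sin ψ := Real.sin_nonneg_of_nonneg_of_le_pi hψ0 (by linarith [hψ.2])
      have h16 : π ^ 2 ≤ 16 := by nlinarith [Real.pi_le_four, hpi]
      have hB : π ^ 2 * (s - 1) ≤ 16 * s := by nlinarith
      have hq : 0 ≤ ψ ^ 2 * (s - 1) := mul_nonneg (sq_nonneg ψ) (by linarith)
      have h2 : ((s - 1) / 2) ^ 2 * ψ ^ 2 ≤ s * (2 * u * ψ / π) ^ 2 := by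
        have hππ : (0:ℝ) < π ^ 2 := by positivity
        rw [show s * (2 * u * ψ / π) ^ 2 = (4 * s * (u ^ 2) * ψ ^ 2) / π ^ 2 by
          field_simp; ring, le_div_iff₀ hππ, hu2]
        nlinarith [mul_le_mul_of_nonneg_left hB hq]
      have h1 : ((s - 1) / 2) ^ 2 * Real.sin ψ ^ 2 ≤ ((s - 1) / 2) ^ 2 * ψ ^ 2 :=
        mul_le_mul_of_nonneg_left (by nlinarith) (by positivity)
      have hradle : s + ((s - 1) / 2) ^ 2 * Real.sin ψ ^ 2
          ≤ s * (1 + (2 * u * ψ / π) ^ 2) := by nlinarith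
      have hsq_le : Real.sqrt (s + ((s - 1) / 2) ^ 2 * Real.sin ψ ^ 2)
          ≤ Real.sqrt s * Real.sqrt (1 + (2 * u * ψ / π) ^ 2) := by
        rw [← Real.sqrt_mul hs0.le]
        exact Real.sqrt_le_sqrt hradle
      have hpos : (0:ℝ) < Real.sqrt (s + ((s - 1) / 2) ^ 2 * Real.sin ψ ^ 2) :=
        Real.sqrt_pos.2 (by positivity)
      calc (Real.sqrt s)⁻¹ * (1 / Real.sqrt (1 + (2 * u * ψ / π) ^ 2))
          = 1 / (Real.sqrt s * Real.sqrt (1 + (2 * u * ψ / π) ^ 2)) := by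
            rw [one_div, one_div, mul_inv]
        _ ≤ 1 / Real.sqrt (s + ((s - 1) / 2) ^ 2 * Real.sin ψ ^ 2) :=
            one_div_le_one_div_of_le hpos hsq_le
    have mono := intervalIntegral.integral_mono_on (μ := volume)
      (f := fun ψ : ℝ => (Real.sqrt s)⁻¹ * (1 / Real.sqrt (1 + (2 * u * ψ / π) ^ 2)))
      (g := fun ψ : ℝ => 1 / Real.sqrt (s + ((s - 1) / 2) ^ 2 * Real.sin ψ ^ 2))
      (by positivity) (hminor_cont.intervalIntegrable _ _)
      ((cont_h hs1).intervalIntegrable _ _) ptwise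
    refine le_trans (le_of_eq ?_) mono
    rw [intervalIntegral.integral_const_mul, ftc_arsinh hu0,
      div_eq_iff (by positivity : Real.sqrt s * u ≠ 0)]
    field_simp
  · -- UPPER BOUND
    rw [hIg]
    have hrat_cont : Continuous (fun θ : ℝ => 1 / (1 + u ^ 2 * (1 - 2 * θ / π) ^ 2)) := by
      apply Continuous.div continuous_const (by continuity)
      intro x
      positivity
    have ptwise : ∀ θ ∈ Icc (0:ℝ) (π/2),
        1 / Real.sqrt (s ^ 2 * Real.cos θ ^ 2 + Real.sin θ ^ 2)
          ≤ 1 / (1 + u ^ 2 * (1 - 2 * θ / π) ^ 2) := by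
      intro θ hθ
      have hθ0 : 0 ≤ θ := hθ.1
      have hθ2 : θ ≤ π / 2 := hθ.2
      have hl0 : 0 ≤ 1 - 2 * θ / π := by
        rw [sub_nonneg, div_le_one hpi]
        linarith
      have hcos_ge : 1 - 2 * θ / π ≤ Real.cos θ := by
        have hj := Real.mul_le_sin (x := π/2 - θ) (by linarith) (by linarith)
        rw [Real.sin_pi_div_two_sub] at hj
        calc 1 - 2 * θ / π = 2 / π * (π / 2 - θ) := by field_simp
          _ ≤ Real.cos θ := hj
      have hsq' : (1 - 2 * θ / π) ^ 2 ≤ Real.cos θ ^ 2 := by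
        exact pow_le_pow_left₀ hl0 hcos_ge 2
      have hc1 : Real.cos θ ^ 2 ≤ 1 := by
        nlinarith [Real.sin_sq_add_cos_sq θ, sq_nonneg (Real.sin θ)]
      have hA : 1 + u ^ 2 * (1 - 2 * θ / π) ^ 2 ≤ 1 + u ^ 2 * Real.cos θ ^ 2 :=
        by nlinarith [sq_nonneg u]
      have hB : (1 + u ^ 2 * Real.cos θ ^ 2) ^ 2 ≤ s ^ 2 * Real.cos θ ^ 2 + Real.sin θ ^ 2 := by
        rw [Real.sin_sq]
        have hu4 : u ^ 4 = (s - 1) ^ 2 := by rw [show u ^ 4 = (u ^ 2) ^ 2 by ring, hu2]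
        have hkey : (0:ℝ) ≤ (s - 1) ^ 2 * Real.cos θ ^ 2 * (1 - Real.cos θ ^ 2) :=
          mul_nonneg (mul_nonneg (sq_nonneg _) (sq_nonneg _)) (by linarith)
        have expand : s ^ 2 * Real.cos θ ^ 2 + (1 - Real.cos θ ^ 2)
            - (1 + u ^ 2 * Real.cos θ ^ 2) ^ 2
            = (s - 1) ^ 2 * Real.cos θ ^ 2 * (1 - Real.cos θ ^ 2) := by
          linear_combination
            (-(2 * Real.cos θ ^ 2 + (Real.cos θ ^ 2) ^ 2 * (s - 1 + u ^ 2))) * hu2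
        linarith [hkey, expand]
      have hpos : (0:ℝ) < 1 + u ^ 2 * (1 - 2 * θ / π) ^ 2 := by positivity
      have hle : 1 + u ^ 2 * (1 - 2 * θ / π) ^ 2
          ≤ Real.sqrt (s ^ 2 * Real.cos θ ^ 2 + Real.sin θ ^ 2) := by
        rw [Real.le_sqrt hpos.le (by positivity)]
        calc (1 + u ^ 2 * (1 - 2 * θ / π) ^ 2) ^ 2 ≤ (1 + u ^ 2 * Real.cos θ ^ 2) ^ 2 := by
              apply pow_le_pow_left₀ (by positivity) hA
          _ ≤ _ := hB
      exact one_div_le_one_div_of_le hpos hle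
    have hg_cont : Continuous (fun θ : ℝ => 1 / Real.sqrt (s ^ 2 * Real.cos θ ^ 2 + Real.sin θ ^ 2)) := by
      apply Continuous.div continuous_const (Real.continuous_sqrt.comp (by continuity))
      intro θ
      show Real.sqrt (s ^ 2 * Real.cos θ ^ 2 + Real.sin θ ^ 2) ≠ 0
      have h0 : (0:ℝ) ≤ (s ^ 2 - 1) * Real.cos θ ^ 2 := mul_nonneg (by nlinarith) (sq_nonneg _)
      have h1 : (1:ℝ) ≤ s ^ 2 * Real.cos θ ^ 2 + Real.sin θ ^ 2 := by
        nlinarith [Real.sin_sq_add_cos_sq θ]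
      exact (Real.sqrt_pos.2 (by linarith)).ne'
    have mono := intervalIntegral.integral_mono_on (μ := volume)
      (f := fun θ : ℝ => 1 / Real.sqrt (s ^ 2 * Real.cos θ ^ 2 + Real.sin θ ^ 2))
      (g := fun θ : ℝ => 1 / (1 + u ^ 2 * (1 - 2 * θ / π) ^ 2))
      (by positivity) (hg_cont.intervalIntegrable _ _)
      (hrat_cont.intervalIntegrable _ _) ptwise
    refine le_trans mono (le_of_eq ?_)
    rw [ftc_arctan hu0, eq_div_iff hu0.ne']
    field_simp

end AuxLemmas
end

section
/- For all real numbers a, b with 0 < a < b, one has (π/6)·(2a + b) < ∫₀^{π/2} √(a² sin²θ + b² cos²θ) dθ ≤ (π/6)·(a + 2b). -/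
open Real intervalIntegral

lemma aux_int (p q r s : ℝ) :
    (∫ θ in (0:ℝ)..(π / 2), (p * Real.sin θ ^ 2 + q * Real.cos θ ^ 2 + r * Real.cos θ + s))
      = p * (π / 4) + q * (π / 4) + r + s * (π / 2) := by
  have h1 : IntervalIntegrable (fun θ : ℝ => p * Real.sin θ ^ 2) MeasureTheory.volume 0 (π/2) := by
    apply Continuous.intervalIntegrable; continuity
  have h2 : IntervalIntegrable (fun θ : ℝ => q * Real.cos θ ^ 2) MeasureTheory.volume 0 (π/2) := by
    apply Continuous.intervalIntegrable; continuity
  have h3 : IntervalIntegrable (fun θ : ℝ => r * Real.cos θ) MeasureTheory.volume 0 (π/2) := by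
    apply Continuous.intervalIntegrable; continuity
  have h4 : IntervalIntegrable (fun θ : ℝ => (s : ℝ)) MeasureTheory.volume 0 (π/2) := by
    apply Continuous.intervalIntegrable; continuity
  rw [intervalIntegral.integral_add ((h1.add h2).add h3) h4,
      intervalIntegral.integral_add (h1.add h2) h3,
      intervalIntegral.integral_add h1 h2,
      intervalIntegral.integral_const_mul, intervalIntegral.integral_const_mul,
      intervalIntegral.integral_const_mul,
      integral_sin_sq, integral_cos_sq, integral_cos, intervalIntegral.integral_const]
  simp [Real.sin_pi_div_two, Real.cos_pi_div_two]
  ring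

lemma aux_arith (a b : ℝ) (ha : 0 < a) (hab : a < b) (hc : b ≤ 6*a) :
    a^2/(2*((a+2*b)/3)) * (π/4) + b^2/(2*((a+2*b)/3)) * (π/4) + 0 + ((a+2*b)/3/2) * (π/2)
      ≤ (π/6) * (a + 2*b) := by
  have hpi : (0:ℝ) < π := Real.pi_pos
  have h8 : (0:ℝ) < a + 2*b := by linarith
  have key2 : 9*(a^2+b^2) ≤ 2*(a+2*b)^2 := by nlinarith
  have e : a^2/(2*((a+2*b)/3)) * (π/4) + b^2/(2*((a+2*b)/3)) * (π/4) + 0 + ((a+2*b)/3/2) * (π/2)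
      = (π * (9*(a^2+b^2)) + π * ((a+2*b)^2 * 2)) / (24 * (a+2*b)) := by
    field_simp
    ring
  rw [e, div_le_iff₀ (by positivity)]
  have h9 := mul_le_mul_of_nonneg_left key2 (le_of_lt hpi)
  nlinarith [h9]

set_option maxHeartbeats 2000000 in
theorem stmt_12 (a b : ℝ) (ha : 0 < a) (hab : a < b) :
    (π / 6) * (2 * a + b)
      < (∫ θ in (0:ℝ)..(π / 2), Real.sqrt (a ^ 2 * Real.sin θ ^ 2 + b ^ 2 * Real.cos θ ^ 2)) ∧
    (∫ θ in (0:ℝ)..(π / 2), Real.sqrt (a ^ 2 * Real.sin θ ^ 2 + b ^ 2 * Real.cos θ ^ 2))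
      ≤ (π / 6) * (a + 2 * b) := by
  have hb : 0 < b := ha.trans hab
  have hpi : (0:ℝ) < π := Real.pi_pos
  have h02 : (0:ℝ) ≤ π / 2 := by linarith
  have hfc : Continuous fun θ : ℝ => Real.sqrt (a ^ 2 * Real.sin θ ^ 2 + b ^ 2 * Real.cos θ ^ 2) := by
    apply Real.continuous_sqrt.comp; continuity
  have hfi : IntervalIntegrable (fun θ : ℝ => Real.sqrt (a ^ 2 * Real.sin θ ^ 2 + b ^ 2 * Real.cos θ ^ 2)) MeasureTheory.volume 0 (π/2) := hfc.intervalIntegrable _ _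
  constructor
  · -- lower bound
    have hlow : ∀ θ ∈ Set.Icc (0:ℝ) (π/2),
        a * Real.sin θ ^ 2 + b * Real.cos θ ^ 2 + 0 * Real.cos θ + 0
          ≤ Real.sqrt (a ^ 2 * Real.sin θ ^ 2 + b ^ 2 * Real.cos θ ^ 2) := by
      intro θ _
      have hs := Real.sin_sq_add_cos_sq θ
      have h0 : 0 ≤ a * Real.sin θ ^ 2 + b * Real.cos θ ^ 2 := by positivity
      rw [show a * Real.sin θ ^ 2 + b * Real.cos θ ^ 2 + 0 * Real.cos θ + 0
            = a * Real.sin θ ^ 2 + b * Real.cos θ ^ 2 by ring]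
      rw [Real.le_sqrt h0]
      · nlinarith [sq_nonneg (Real.sin θ * Real.cos θ * (a - b)), sq_nonneg (Real.sin θ), sq_nonneg (Real.cos θ)]
      · positivity
    have hmono := intervalIntegral.integral_mono_on h02
      (by apply Continuous.intervalIntegrable; continuity) hfi hlow
    rw [aux_int] at hmono
    nlinarith
  · -- upper bound
    by_cases hc : b ≤ 6 * a
    · -- tangent line bound with c0 = (a+2b)/3
      have hc0pos : 0 < (a + 2 * b) / 3 := by positivity
      have hup : ∀ θ ∈ Set.Icc (0:ℝ) (π/2),
          Real.sqrt (a ^ 2 * Real.sin θ ^ 2 + b ^ 2 * Real.cos θ ^ 2)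
            ≤ (a^2/(2*((a+2*b)/3))) * Real.sin θ ^ 2 + (b^2/(2*((a+2*b)/3))) * Real.cos θ ^ 2
              + 0 * Real.cos θ + ((a+2*b)/3/2) := by
        intro θ _
        have hx : (0:ℝ) ≤ a ^ 2 * Real.sin θ ^ 2 + b ^ 2 * Real.cos θ ^ 2 := by positivity
        have hsq := Real.sq_sqrt hx
        have hsn : 0 ≤ Real.sqrt (a ^ 2 * Real.sin θ ^ 2 + b ^ 2 * Real.cos θ ^ 2) := Real.sqrt_nonneg _
        have key : 2 * ((a+2*b)/3) * Real.sqrt (a ^ 2 * Real.sin θ ^ 2 + b ^ 2 * Real.cos θ ^ 2)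
            ≤ (a ^ 2 * Real.sin θ ^ 2 + b ^ 2 * Real.cos θ ^ 2) + ((a+2*b)/3)^2 := by
          nlinarith [sq_nonneg (Real.sqrt (a ^ 2 * Real.sin θ ^ 2 + b ^ 2 * Real.cos θ ^ 2) - (a+2*b)/3)]
        have e : (a^2/(2*((a+2*b)/3))) * Real.sin θ ^ 2 + (b^2/(2*((a+2*b)/3))) * Real.cos θ ^ 2
              + 0 * Real.cos θ + ((a+2*b)/3/2)
            = ((a ^ 2 * Real.sin θ ^ 2 + b ^ 2 * Real.cos θ ^ 2) + ((a+2*b)/3)^2) / (2*((a+2*b)/3)) := by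
          field_simp
          ring
        rw [e, le_div_iff₀ (by positivity)]
        linarith
      have hmono := intervalIntegral.integral_mono_on h02 hfi
        (by apply Continuous.intervalIntegrable; continuity) hup
      rw [aux_int] at hmono
      have hfin := aux_arith a b ha hab hc
      linarith
    · push_neg at hc
      have hup : ∀ θ ∈ Set.Icc (0:ℝ) (π/2),
          Real.sqrt (a ^ 2 * Real.sin θ ^ 2 + b ^ 2 * Real.cos θ ^ 2)
            ≤ a * Real.sin θ ^ 2 + 0 * Real.cos θ ^ 2 + b * Real.cos θ + 0 := by
        intro θ hθ
        have hcos : 0 ≤ Real.cos θ := Real.cos_nonneg_of_mem_Icc ⟨by linarith [hθ.1, hpi], hθ.2⟩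
        have hs := Real.sin_sq_add_cos_sq θ
        have hrhs : 0 ≤ a * Real.sin θ ^ 2 + b * Real.cos θ := by positivity
        have h2 : a ^ 2 * Real.sin θ ^ 2 + b ^ 2 * Real.cos θ ^ 2
            ≤ (a * Real.sin θ ^ 2 + b * Real.cos θ)^2 := by
          have hc1 : Real.cos θ ≤ 1 := Real.cos_le_one θ
          have h3 : 0 ≤ Real.sin θ ^ 2 * Real.cos θ * (2*a*b - a^2 * Real.cos θ) := by
            apply mul_nonneg (mul_nonneg (sq_nonneg _) hcos)
            nlinarith
          have hc2 : Real.cos θ ^ 2 = 1 - Real.sin θ ^ 2 := by linarith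
          have h5 : a^2 * Real.sin θ^2 * Real.cos θ^2 = a^2 * Real.sin θ^2 * (1 - Real.sin θ^2) := by
            rw [hc2]
          nlinarith [h3, h5]
        calc Real.sqrt (a ^ 2 * Real.sin θ ^ 2 + b ^ 2 * Real.cos θ ^ 2)
            ≤ Real.sqrt ((a * Real.sin θ ^ 2 + b * Real.cos θ)^2) := Real.sqrt_le_sqrt h2
          _ = a * Real.sin θ ^ 2 + b * Real.cos θ := Real.sqrt_sq hrhs
          _ = a * Real.sin θ ^ 2 + 0 * Real.cos θ ^ 2 + b * Real.cos θ + 0 := by ring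
      have hmono := intervalIntegral.integral_mono_on h02 hfi
        (by apply Continuous.intervalIntegrable; continuity) hup
      rw [aux_int] at hmono
      have : a * (π/4) + 0 * (π/4) + b + 0 * (π/2) ≤ (π/6) * (a + 2*b) := by
        nlinarith [Real.pi_gt_d6, hc]
      linarith
end

section
/- For all real numbers a, b with a > 0 and b ≥ 7a, one has (π/6)·(a + 2b) ≤ (π/4)·√(2(a² + b²)). -/
open Real

theorem stmt_13 (a b : ℝ) (ha : 0 < a) (hb : 7 * a ≤ b) :
    (π / 6) * (a + 2 * b) ≤ (π / 4) * Real.sqrt (2 * (a ^ 2 + b ^ 2)) := by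
  have hkey : (2 / 3 : ℝ) * (a + 2 * b) ≤ Real.sqrt (2 * (a ^ 2 + b ^ 2)) := by
    have h2 : Real.sqrt (2 * (a ^ 2 + b ^ 2)) ^ 2 = 2 * (a ^ 2 + b ^ 2) :=
      Real.sq_sqrt (by positivity)
    nlinarith [Real.sqrt_nonneg (2 * (a ^ 2 + b ^ 2)), sq_nonneg (b - a), sq_nonneg (b - 7 * a)]
  nlinarith [Real.pi_pos, mul_le_mul_of_nonneg_left hkey Real.pi_pos.le]
end

section
/- For all real x with 0 ≤ x ≤ 1, one has 1/√(4 − x² − x³) ≥ 1/2 + ((√2 − 1)/2)·x⁴ + (11√2/8 − 2)·(1 − x)·x³. -/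
open Real

set_option maxHeartbeats 1000000 in
theorem stmt_15 (x : ℝ) (hx0 : 0 ≤ x) (hx1 : x ≤ 1) :
    1 / Real.sqrt (4 - x ^ 2 - x ^ 3)
      ≥ 1 / 2 + ((Real.sqrt 2 - 1) / 2) * x ^ 4
          + (11 * Real.sqrt 2 / 8 - 2) * (1 - x) * x ^ 3 := by
  set s := Real.sqrt 2 with hs
  have hs2 : s ^ 2 = 2 := Real.sq_sqrt (by norm_num)
  have hs_lb : 1.414 ≤ s := by nlinarith [Real.sqrt_nonneg 2]
  have hs_ub : s ≤ 1.4143 := by nlinarith [Real.sqrt_nonneg 2]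
  have hA : (0:ℝ) ≤ 4 - x ^ 2 - x ^ 3 := by nlinarith
  set t := Real.sqrt (4 - x ^ 2 - x ^ 3) with htdef
  have ht2 : t ^ 2 = 4 - x ^ 2 - x ^ 3 := Real.sq_sqrt hA
  have htpos : 0 < t := by
    have h1 : (2:ℝ) ≤ 4 - x^2 - x^3 := by nlinarith
    have h2 := Real.sqrt_le_sqrt h1
    have h3 : (0:ℝ) < Real.sqrt 2 := Real.sqrt_pos.mpr (by norm_num)
    linarith
  set R := 1 / 2 + ((s - 1) / 2) * x ^ 4 + (11 * s / 8 - 2) * (1 - x) * x ^ 3 with hR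
  have hRpos : 0 ≤ R := by
    rw [hR]
    nlinarith [sq_nonneg x, sq_nonneg (1-x), pow_nonneg hx0 3, pow_nonneg hx0 4,
      mul_nonneg (mul_nonneg (sub_nonneg.mpr hx1) (pow_nonneg hx0 3)) (sub_nonneg.mpr hs_lb)]
  set E := 1/4 + (35/4 - 11/2*s)*x + (45/4 - 15/2*s)*x^2 + (47/4 - 65/8*s)*x^3
      + (-(155:ℝ)/8 + 55/4*s)*x^4 + (-(23:ℝ)/4 + 17/4*s)*x^5 + (17/32 - 1/4*s)*x^6
      + (121/32 - 21/8*s)*x^7 with hE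
  have hEnn : 0 ≤ E := by
    rw [hE]
    have c1 : 0 ≤ 35/4 - 11/2*s := by linarith
    have c2 : 0 ≤ 45/4 - 15/2*s := by linarith
    have c3 : 0 ≤ 47/4 - 65/8*s := by linarith
    have c4 : 0 ≤ -(155:ℝ)/8 + 55/4*s := by linarith
    have c5 : 0 ≤ -(23:ℝ)/4 + 17/4*s := by linarith
    have c6 : 0 ≤ 17/32 - 1/4*s := by linarith
    have c7 : 0 ≤ 121/32 - 21/8*s := by linarith
    exact add_nonneg (add_nonneg (add_nonneg (add_nonneg (add_nonneg (add_nonneg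
      (add_nonneg (by norm_num) (mul_nonneg c1 hx0)) (mul_nonneg c2 (pow_nonneg hx0 2)))
      (mul_nonneg c3 (pow_nonneg hx0 3))) (mul_nonneg c4 (pow_nonneg hx0 4)))
      (mul_nonneg c5 (pow_nonneg hx0 5))) (mul_nonneg c6 (pow_nonneg hx0 6)))
      (mul_nonneg c7 (pow_nonneg hx0 7))
  have hid : 1 - R^2 * (4 - x^2 - x^3) = x^2 * (1-x)^2 * E := by
    rw [hR, hE]
    linear_combination (-(121:ℝ)/16*x^6 + 77/8*x^7 - 75/64*x^8 - 33/64*x^9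
      - 105/64*x^10 + 49/64*x^11) * hs2
  have key : R ^ 2 * t ^ 2 ≤ 1 := by
    rw [ht2]
    nlinarith [mul_nonneg (mul_nonneg (sq_nonneg x) (sq_nonneg (1-x))) hEnn]
  have hRt : R * t ≤ 1 := by
    nlinarith [mul_nonneg hRpos htpos.le]
  show R ≤ 1 / t
  rw [le_div_iff₀ htpos]
  exact hRt
end

section
/- One has ∫₀¹ dx/√(4 − x² − x³) > 3/10 + 27√2/160. -/
open Real

theorem stmt_16 :
    (∫ x in (0:ℝ)..1, 1 / Real.sqrt (4 - x ^ 2 - x ^ 3))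
      > 3 / 10 + 27 * Real.sqrt 2 / 160 := by
  have h2 : Real.sqrt 2 ^ 2 = 2 := Real.sq_sqrt (by norm_num)
  have h2pos : (0:ℝ) < Real.sqrt 2 := Real.sqrt_pos.mpr (by norm_num)
  set c1 : ℝ := 45 * Real.sqrt 2 / 128 with hc1
  set c2 : ℝ := 27 * Real.sqrt 2 / 512 with hc2
  have hint1 : IntervalIntegrable (fun x : ℝ => c1 + c2 * x ^ 2 + c2 * x ^ 3)
      MeasureTheory.volume 0 1 := by
    exact (by fun_prop : Continuous _).intervalIntegrable _ _
  have hcont : ContinuousOn (fun x : ℝ => 1 / Real.sqrt (4 - x ^ 2 - x ^ 3))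
      (Set.uIcc 0 1) := by
    apply ContinuousOn.div continuousOn_const
    · exact (Real.continuous_sqrt.comp (by continuity)).continuousOn
    · intro x hx
      rw [Set.uIcc_of_le (by norm_num)] at hx
      obtain ⟨hx0, hx1⟩ := hx
      have : (0:ℝ) < 4 - x ^ 2 - x ^ 3 := by nlinarith
      positivity
  have hint2 : IntervalIntegrable (fun x : ℝ => 1 / Real.sqrt (4 - x ^ 2 - x ^ 3))
      MeasureTheory.volume 0 1 := hcont.intervalIntegrable
  have key : (∫ x in (0:ℝ)..1, c1 + c2 * x ^ 2 + c2 * x ^ 3)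
      ≤ ∫ x in (0:ℝ)..1, 1 / Real.sqrt (4 - x ^ 2 - x ^ 3) := by
    apply intervalIntegral.integral_mono_on (by norm_num) hint1 hint2
    intro x hx
    obtain ⟨hx0, hx1⟩ := hx
    have hden : (0:ℝ) < 4 - x ^ 2 - x ^ 3 := by nlinarith
    set s : ℝ := Real.sqrt (4 - x ^ 2 - x ^ 3) with hs
    have hspos : 0 < s := Real.sqrt_pos.mpr hden
    have hssq : s ^ 2 = 4 - x ^ 2 - x ^ 3 := Real.sq_sqrt hden.le
    rw [le_div_iff₀ hspos]
    have hPpos : 0 < c1 + c2 * x ^ 2 + c2 * x ^ 3 := by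
      rw [hc1, hc2]; positivity
    have hPs2 : ((c1 + c2 * x ^ 2 + c2 * x ^ 3) * s) ^ 2 ≤ 1 := by
      have expand : ((c1 + c2 * x ^ 2 + c2 * x ^ 3) * s) ^ 2
          = Real.sqrt 2 ^ 2 * ((180 + 27 * (x ^ 2 + x ^ 3)) / 512) ^ 2 * s ^ 2 := by
        rw [hc1, hc2]; ring
      rw [expand, h2, hssq]
      nlinarith [mul_nonneg (sq_nonneg (9 * x ^ 2 + 9 * x ^ 3 - 4))
        (show (0:ℝ) ≤ x ^ 2 + x ^ 3 + 92 / 9 by positivity)]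
    nlinarith [hPs2, mul_pos hPpos hspos]
  have hval : (∫ x in (0:ℝ)..1, c1 + c2 * x ^ 2 + c2 * x ^ 3) = c1 + c2 * (7 / 12) := by
    rw [intervalIntegral.integral_add, intervalIntegral.integral_add,
      intervalIntegral.integral_const, intervalIntegral.integral_const_mul,
      intervalIntegral.integral_const_mul, integral_pow, integral_pow]
    · field_simp
      ring
    · exact intervalIntegrable_const
    · exact (by fun_prop : Continuous _).intervalIntegrable _ _
    · exact (by fun_prop : Continuous _).intervalIntegrable _ _
    · exact (by fun_prop : Continuous _).intervalIntegrable _ _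
  have hfin : 3 / 10 + 27 * Real.sqrt 2 / 160 < c1 + c2 * (7 / 12) := by
    rw [hc1, hc2]
    nlinarith [h2, h2pos]
  calc 3 / 10 + 27 * Real.sqrt 2 / 160 < c1 + c2 * (7 / 12) := hfin
    _ = _ := hval.symm
    _ ≤ _ := key
end

section
/- For all real x with 0 ≤ x ≤ 1, one has 1/√(4 − x² − x³) ≤ 1/2 + ((√2 − 1)/2)·x² + ((5 − 4√2)/8)·x²·(1 − x)·((8√2 − 9)/(8√2 − 10) + x). -/
set_option maxHeartbeats 1000000

open Real

theorem stmt_17 (x : ℝ) (hx0 : 0 ≤ x) (hx1 : x ≤ 1) :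
    1 / Real.sqrt (4 - x ^ 2 - x ^ 3)
      ≤ 1 / 2 + ((Real.sqrt 2 - 1) / 2) * x ^ 2
          + ((5 - 4 * Real.sqrt 2) / 8) * x ^ 2 * (1 - x)
              * ((8 * Real.sqrt 2 - 9) / (8 * Real.sqrt 2 - 10) + x) := by
  set s := Real.sqrt 2 with hsdef
  have hs : s ^ 2 = 2 := Real.sq_sqrt (by norm_num)
  have hs0 : 0 ≤ s := Real.sqrt_nonneg 2
  have hslb : (1.41 : ℝ) ≤ s := by nlinarith
  have hsub : s ≤ 1.42 := by nlinarith
  have hden : (8 : ℝ) * s - 10 ≠ 0 := by nlinarith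
  have hfrac : (8 * s - 9) / (8 * s - 10) = (19 + 4 * s) / 14 := by
    rw [div_eq_div_iff hden (by norm_num)]
    nlinarith
  rw [hfrac]
  set q : ℝ := 4 - x ^ 2 - x ^ 3 with hqdef
  have hq2 : 2 ≤ q := by nlinarith
  have hq0 : 0 < q := by linarith
  have hsq : 0 < Real.sqrt q := Real.sqrt_pos.mpr hq0
  set R : ℝ := 1 / 2 + ((s - 1) / 2) * x ^ 2
      + ((5 - 4 * s) / 8) * x ^ 2 * (1 - x) * ((19 + 4 * s) / 14 + x) with hRdef
  set G : ℝ := (2 * s - 163/64) + (2 * s - 169/64) * x + ((7/4) * s - 609/256) * x ^ 2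
      + ((3/2) * s - 133/64) * x ^ 3 + (397/256 - (17/16) * s) * x ^ 4
      + (109/64 - (19/16) * s) * x ^ 5 + (57/64 - (5/8) * s) * x ^ 6 with hGdef
  have hG : 0 ≤ G := by
    have c0 : (0:ℝ) ≤ 2 * s - 163/64 := by linarith
    have c1 : (0:ℝ) ≤ 2 * s - 169/64 := by linarith
    have c2 : (0:ℝ) ≤ (7/4) * s - 609/256 := by linarith
    have c3 : (0:ℝ) ≤ (3/2) * s - 133/64 := by linarith
    have c4 : (0:ℝ) ≤ 397/256 - (17/16) * s := by linarith
    have c5 : (0:ℝ) ≤ 109/64 - (19/16) * s := by linarith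
    have c6 : (0:ℝ) ≤ 57/64 - (5/8) * s := by linarith
    have hx2 : (0:ℝ) ≤ x ^ 2 := by positivity
    have hx3 : (0:ℝ) ≤ x ^ 3 := by positivity
    have hx4 : (0:ℝ) ≤ x ^ 4 := by positivity
    have hx5 : (0:ℝ) ≤ x ^ 5 := by positivity
    have hx6 : (0:ℝ) ≤ x ^ 6 := by positivity
    rw [hGdef]
    have := mul_nonneg c1 hx0
    have := mul_nonneg c2 hx2
    have := mul_nonneg c3 hx3
    have := mul_nonneg c4 hx4
    have := mul_nonneg c5 hx5
    have := mul_nonneg c6 hx6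
    nlinarith
  have hfac : R ^ 2 * q - 1 = x ^ 4 * (1 - x) * G := by
    rw [hRdef, hqdef, hGdef]
    linear_combination ((-4/7)*x^2 + (4/7)*x^3 + (-9/98)*x^4 + (4/49)*x^4*s^2
      + (16/49)*x^5 + (-8/49)*x^5*s^2 + (211/392)*x^6 + (-4/7)*x^6*s + (3/49)*x^6*s^2
      + (-289/392)*x^7 + (4/7)*x^7*s + (1/49)*x^7*s^2 + (299/392)*x^8 + (1/7)*x^8*s
      + (1/49)*x^8*s^2 + (9/392)*x^9 + (-1/49)*x^9*s^2 + (-1/14)*x^10 + (-1/7)*x^10*s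
      + (-1/4)*x^11) * hs
  have hmain : 1 ≤ R ^ 2 * q := by
    have h1 : 0 ≤ x ^ 4 * (1 - x) * G := by
      apply mul_nonneg (mul_nonneg (by positivity) (by linarith)) hG
    linarith [hfac]
  have hR0 : 0 ≤ R := by
    rw [hRdef]
    nlinarith [sq_nonneg x, sq_nonneg (1-x), mul_nonneg (mul_nonneg hx0 hx0) hx0,
      mul_nonneg hx0 hx0, sq_nonneg (x*(1-x))]
  rw [div_le_iff₀ hsq]
  have hsq2 : Real.sqrt q ^ 2 = q := Real.sq_sqrt hq0.le
  nlinarith [mul_nonneg hR0 hsq.le, sq_nonneg (R * Real.sqrt q - 1), sq_nonneg (R * Real.sqrt q)]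
end

section
/- One has ∫₀¹ dx/√(4 − x² − x³) < 79/192 + √2/10. -/
open Real

theorem stmt_18 :
    (∫ x in (0:ℝ)..1, 1 / Real.sqrt (4 - x ^ 2 - x ^ 3))
      < 79 / 192 + Real.sqrt 2 / 10 := by
  -- pointwise bound by the polynomial g
  have hg : ∀ x ∈ Set.Icc (0:ℝ) 1,
      1 / Real.sqrt (4 - x ^ 2 - x ^ 3)
        ≤ 1/2 + x^2/16 + x^3/16 + 3*x^4/256 + 71*x^5/1000 := by
    rintro x ⟨hx0, hx1⟩
    set g : ℝ := 1/2 + x^2/16 + x^3/16 + 3*x^4/256 + 71*x^5/1000 with hgdef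
    have hA : (0:ℝ) < 4 - x ^ 2 - x ^ 3 := by nlinarith
    have hgpos : 0 < g := by rw [hgdef]; positivity
    have h1 : x ≤ 1 := hx1
    have h2 : x^2 ≤ 1 := pow_le_one₀ hx0 hx1
    have h3 : x^3 ≤ 1 := pow_le_one₀ hx0 hx1
    have h4 : x^4 ≤ 1 := pow_le_one₀ hx0 hx1
    have h5 : (0:ℝ) ≤ x^5 := pow_nonneg hx0 5
    have h6 : x^6 ≤ 1 := pow_le_one₀ hx0 hx1
    have h7 : x^7 ≤ 1 := pow_le_one₀ hx0 hx1
    have h8 : x^8 ≤ 1 := pow_le_one₀ hx0 hx1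
    have hq : (0:ℝ) ≤ 761/4000 - 29/512*x - 3397/64000*x^2 - 98579/2048000*x^3
        - 1159/128000*x^4 + 831311/1024000000*x^5 - 87461/8192000*x^6
        - 107281/16000000*x^7 - 5041/1000000*x^8 := by
      nlinarith [h1, h2, h3, h4, h5, h6, h7, h8]
    have key : 1 ≤ g ^ 2 * (4 - x ^ 2 - x ^ 3) := by
      have := mul_nonneg h5 hq
      rw [hgdef]
      nlinarith [this]
    have hsq : 1 / g ≤ Real.sqrt (4 - x ^ 2 - x ^ 3) := by
      rw [Real.le_sqrt' (by positivity)]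
      rw [div_pow, one_pow, div_le_iff₀ (by positivity)]
      linarith [key]
    have hsqpos : 0 < Real.sqrt (4 - x ^ 2 - x ^ 3) := Real.sqrt_pos.mpr hA
    calc 1 / Real.sqrt (4 - x ^ 2 - x ^ 3) ≤ 1 / (1 / g) := by
          apply one_div_le_one_div_of_le (by positivity) hsq
      _ = g := one_div_one_div g
  -- integrability
  have hcont : ContinuousOn (fun x : ℝ => 1 / Real.sqrt (4 - x ^ 2 - x ^ 3))
      (Set.Icc (0:ℝ) 1) := by
    apply ContinuousOn.div continuousOn_const
    · exact (Real.continuous_sqrt.comp (by fun_prop)).continuousOn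
    · intro x hx
      obtain ⟨hx0, hx1⟩ := hx
      have hA : (0:ℝ) < 4 - x ^ 2 - x ^ 3 := by nlinarith
      exact ne_of_gt (Real.sqrt_pos.mpr hA)
  have hInt1 : IntervalIntegrable (fun x : ℝ => 1 / Real.sqrt (4 - x ^ 2 - x ^ 3))
      MeasureTheory.volume 0 1 := by
    apply ContinuousOn.intervalIntegrable
    rwa [Set.uIcc_of_le (by norm_num : (0:ℝ) ≤ 1)]
  have hInt2 : IntervalIntegrable
      (fun x : ℝ => 1/2 + x^2/16 + x^3/16 + 3*x^4/256 + 71*x^5/1000)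
      MeasureTheory.volume 0 1 := by
    apply Continuous.intervalIntegrable; fun_prop
  have hmono : (∫ x in (0:ℝ)..1, 1 / Real.sqrt (4 - x ^ 2 - x ^ 3))
      ≤ ∫ x in (0:ℝ)..1, (1/2 + x^2/16 + x^3/16 + 3*x^4/256 + 71*x^5/1000) :=
    intervalIntegral.integral_mono_on (by norm_num) hInt1 hInt2 hg
  have hval : (∫ x in (0:ℝ)..1, (1/2 + x^2/16 + x^3/16 + 3*x^4/256 + 71*x^5/1000 : ℝ))
      = 52861/96000 := by
    have : ∀ x ∈ Set.uIcc (0:ℝ) 1, HasDerivAt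
        (fun x : ℝ => x/2 + x^3/48 + x^4/64 + 3*x^5/1280 + 71*x^6/6000)
        (1/2 + x^2/16 + x^3/16 + 3*x^4/256 + 71*x^5/1000) x := by
      intro x _
      have h := (((((hasDerivAt_id x).div_const 2).add
        ((hasDerivAt_pow 3 x).div_const 48)).add
        ((hasDerivAt_pow 4 x).div_const 64)).add
        (((hasDerivAt_pow 5 x).const_mul 3).div_const 1280)).add
        (((hasDerivAt_pow 6 x).const_mul 71).div_const 6000)
      refine h.congr_deriv ?_
      push_cast
      ring
    rw [intervalIntegral.integral_eq_sub_of_hasDerivAt this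
      (by apply Continuous.intervalIntegrable; fun_prop)]
    norm_num
  have hs2 : (1.4:ℝ) < Real.sqrt 2 := by
    rw [show (1.4:ℝ) = Real.sqrt (1.4^2) by rw [Real.sqrt_sq]; norm_num]
    exact Real.sqrt_lt_sqrt (by norm_num) (by norm_num)
  calc (∫ x in (0:ℝ)..1, 1 / Real.sqrt (4 - x ^ 2 - x ^ 3))
      ≤ 52861/96000 := by rw [← hval]; exact hmono
    _ < 79 / 192 + Real.sqrt 2 / 10 := by linarith
end
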